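/- arXiv:0705.1961 — 9 statements merged into one kernel-verified Lean document; each statement's English description precedes it below -/
import Mathlib

section
/- Let φ : A → B be a *-homomorphism between C*-algebras. For every y in the range of φ there exists x ∈ A such that φ(x) = y and ‖x‖ = ‖y‖. -/
lemma aux_quasi_nonneg {A : Type*} [NonUnitalCStarAlgebra A] (a : A) :
    ∀ t ∈ quasispectrum ℝ (star a * a), 0 ≤ t := by
  rw [Unitization.quasispectrum_eq_spectrum_inr' ℝ ℂ]
  intro t ht
  rw [Unitization.inr_mul, Unitization.inr_star] at ht
  exact spectrum_star_mul_self_nonneg t ht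

lemma aux_quasi_le_norm {A : Type*} [NonUnitalCStarAlgebra A] {a : A} {t : ℝ}
    (ht : t ∈ quasispectrum ℝ a) : t ≤ ‖a‖ := by
  rw [Unitization.quasispectrum_eq_spectrum_inr' ℝ ℂ] at ht
  calc t ≤ |t| := le_abs_self t
    _ = ‖t‖ := rfl
    _ ≤ ‖(a : Unitization ℂ A)‖ := spectrum.norm_le_norm_of_mem ht
    _ = ‖a‖ := Unitization.norm_inr a

lemma aux_main {A B : Type*} [NonUnitalCStarAlgebra A] [NonUnitalCStarAlgebra B]
    (φ : A →⋆ₙₐ[ℂ] B) (a : A) (hrpos : 0 < ‖φ a‖) :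
    ∃ x : A, φ x = φ a ∧ ‖x‖ = ‖φ a‖ := by
  have hφcont : Continuous φ :=
    AddMonoidHomClass.continuous_of_bound φ 1
      (by simpa using fun x => NonUnitalStarAlgHom.norm_apply_le φ x)
  set r : ℝ := ‖φ a‖ with hr
  set c : A := star a * a with hc
  have hc_sa : IsSelfAdjoint c := .star_mul_self a
  set g : ℝ → ℝ := fun t => max 0 (1 - r / Real.sqrt (max t (r ^ 2))) with hgdef
  have hsq : ∀ t : ℝ, 0 < Real.sqrt (max t (r ^ 2)) := fun t =>
    Real.sqrt_pos.mpr (lt_of_lt_of_le (by positivity) (le_max_right _ _))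
  have hgcont : Continuous g := by
    apply continuous_const.max
    exact continuous_const.sub <| continuous_const.div
      (by fun_prop) (fun t => (hsq t).ne')
  have hg_zero : ∀ t ≤ r ^ 2, g t = 0 := by
    intro t ht
    simp [hgdef, max_eq_right ht, Real.sqrt_sq hrpos.le, div_self hrpos.ne']
  have hg0 : g 0 = 0 := hg_zero 0 (by positivity)
  set m : A := cfcₙ g c with hm
  have hm_sa : IsSelfAdjoint m := cfcₙ_predicate g c
  set x : A := a - a * m with hx
  have hφc : φ c = star (φ a) * φ a := by simp [hc, map_mul, map_star]
  have hφc_sa : IsSelfAdjoint (φ c) := hφc ▸ .star_mul_self (φ a)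
  have hφm : φ m = 0 := by
    rw [hm, NonUnitalStarAlgHom.map_cfcₙ φ g c hgcont.continuousOn hg0 hφcont hc_sa hφc_sa]
    have : (quasispectrum ℝ (φ c)).EqOn g 0 := by
      intro t ht
      refine hg_zero t ?_
      calc t ≤ ‖φ c‖ := aux_quasi_le_norm ht
        _ = r ^ 2 := by rw [hφc, CStarRing.norm_star_mul_self, sq]
    rw [cfcₙ_congr this, cfcₙ_zero]
  have hφx : φ x = φ a := by
    simp [hx, map_sub, map_mul, hφm]
  refine ⟨x, hφx, le_antisymm ?_ ?_⟩
  · -- ‖x‖ ≤ r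
    have key : star x * x = cfcₙ (fun t => t - t * g t - g t * t + g t * (t * g t)) c := by
      have hgc : ContinuousOn g (quasispectrum ℝ c) := hgcont.continuousOn
      have hid : ContinuousOn (fun t : ℝ => t) (quasispectrum ℝ c) := continuousOn_id
      have htg : ContinuousOn (fun t => t * g t) (quasispectrum ℝ c) := hid.mul hgc
      have hgt : ContinuousOn (fun t => g t * t) (quasispectrum ℝ c) := hgc.mul hid
      have hgtg : ContinuousOn (fun t => g t * (t * g t)) (quasispectrum ℝ c) := hgc.mul htg
      have step1 : cfcₙ (fun t => t * g t) c = c * m := by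
        rw [cfcₙ_mul _ _ c hid rfl hgc hg0, cfcₙ_id' ℝ c]
      have step2 : cfcₙ (fun t => g t * t) c = m * c := by
        rw [cfcₙ_mul _ _ c hgc hg0 hid rfl, cfcₙ_id' ℝ c]
      have step3 : cfcₙ (fun t => g t * (t * g t)) c = m * (c * m) := by
        rw [cfcₙ_mul _ _ c hgc hg0 htg (by simp [hg0]), step1]
      have decomp : cfcₙ (fun t => t - t * g t - g t * t + g t * (t * g t)) c
          = c - c * m - m * c + m * (c * m) := by
        rw [cfcₙ_add (fun t => t - t * g t - g t * t) (fun t => g t * (t * g t)) c ((hid.sub htg).sub hgt) (by simp [hg0]) hgtg (by simp [hg0]),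
          cfcₙ_sub (fun t => t - t * g t) (fun t => g t * t) c (hid.sub htg) (by simp [hg0]) hgt (by simp [hg0]),
          cfcₙ_sub (fun t => t) (fun t => t * g t) c hid rfl htg (by simp [hg0]),
          cfcₙ_id' ℝ c, step1, step2, step3]
      rw [decomp, hx]
      simp only [star_sub, star_mul, hm_sa.star_eq, hc]
      noncomm_ring
    have hbound : ∀ t ∈ quasispectrum ℝ c, ‖t - t * g t - g t * t + g t * (t * g t)‖ ≤ r ^ 2 := by
      intro t ht
      have ht0 : 0 ≤ t := aux_quasi_nonneg a t ht
      have heq : t - t * g t - g t * t + g t * (t * g t) = t * (1 - g t) ^ 2 := by ring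
      rw [heq]
      rcases le_or_gt t (r ^ 2) with h | h
      · rw [hg_zero t h]
        simpa [abs_of_nonneg ht0] using h
      · have ht0' : 0 < t := lt_trans (by positivity) h
        have hrt : r < Real.sqrt t := by
          have := Real.sqrt_lt_sqrt (by positivity) h
          rwa [Real.sqrt_sq hrpos.le] at this
        have hmax : max t (r ^ 2) = t := max_eq_left h.le
        have hst : 0 < Real.sqrt t := lt_trans hrpos hrt
        have hg_eq : g t = 1 - r / Real.sqrt t := by
          rw [hgdef]
          simp only [hmax]
          rw [max_eq_right]
          have : r / Real.sqrt t ≤ 1 := (div_le_one hst).mpr hrt.le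
          linarith
        have hval : t * (1 - g t) ^ 2 = r ^ 2 := by
          rw [hg_eq]
          have h1 : (1 : ℝ) - (1 - r / Real.sqrt t) = r / Real.sqrt t := by ring
          rw [h1, div_pow, Real.sq_sqrt ht0]
          field_simp
        rw [hval]
        simp [abs_of_nonneg (sq_nonneg r)]
    have hxle : ‖x‖ * ‖x‖ ≤ r ^ 2 := by
      rw [← CStarRing.norm_star_mul_self, key]
      exact norm_cfcₙ_le hbound
    nlinarith [norm_nonneg x]
  · calc r = ‖φ x‖ := by rw [hφx]
      _ ≤ ‖x‖ := NonUnitalStarAlgHom.norm_apply_le φ x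

theorem stmt_0
    {A B : Type*} [NonUnitalNormedRing A] [StarRing A] [CStarRing A]
    [NormedSpace ℂ A] [IsScalarTower ℂ A A] [SMulCommClass ℂ A A]
    [StarModule ℂ A] [CompleteSpace A]
    [NonUnitalNormedRing B] [StarRing B] [CStarRing B]
    [NormedSpace ℂ B] [IsScalarTower ℂ B B] [SMulCommClass ℂ B B]
    [StarModule ℂ B] [CompleteSpace B]
    (φ : A →⋆ₙₐ[ℂ] B) :
    ∀ y ∈ Set.range φ, ∃ x : A, φ x = y ∧ ‖x‖ = ‖y‖ := by
  letI : NonUnitalCStarAlgebra A := ⟨⟩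
  letI : NonUnitalCStarAlgebra B := ⟨⟩
  rintro y ⟨a, rfl⟩
  rcases eq_or_lt_of_le (norm_nonneg (φ a)) with h0 | hrpos
  · refine ⟨0, ?_, by simp [← h0]⟩
    rw [map_zero]
    exact (norm_eq_zero.mp h0.symm).symm
  · exact aux_main φ a hrpos
end

section
/- Let 𝓛 be a meet-semilattice. The following are equivalent: (a) every nonempty totally ordered subset of 𝓛 is well-ordered for the induced order (every nonempty subset of it has a least element); (b) every nonempty totally ordered subset of 𝓛 has a least element; (c) every nonempty subset of 𝓛 closed under ∧ has a least element; (d) every nonempty subset of 𝓛 that is closed under ∧ and upward closed has a least element. -/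
theorem stmt_1 {𝓛 : Type*} [SemilatticeInf 𝓛] :
    List.TFAE [
      (∀ C : Set 𝓛, C.Nonempty → IsChain (· ≤ ·) C →
        ∀ S : Set 𝓛, S ⊆ C → S.Nonempty → ∃ m ∈ S, ∀ x ∈ S, m ≤ x),
      (∀ C : Set 𝓛, C.Nonempty → IsChain (· ≤ ·) C → ∃ m ∈ C, ∀ x ∈ C, m ≤ x),
      (∀ M : Set 𝓛, M.Nonempty → (∀ i ∈ M, ∀ j ∈ M, i ⊓ j ∈ M) →
        ∃ m ∈ M, ∀ x ∈ M, m ≤ x),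
      (∀ M : Set 𝓛, M.Nonempty → (∀ i ∈ M, ∀ j ∈ M, i ⊓ j ∈ M) →
        (∀ a ∈ M, ∀ b, a ≤ b → b ∈ M) → ∃ m ∈ M, ∀ x ∈ M, m ≤ x)
    ] := by
  tfae_have 1 → 2 := by
    intro h C hne hch
    exact h C hne hch C subset_rfl hne
  tfae_have 2 → 3 := by
    intro h M hne hcl
    -- Zorn on the dual order: M has a minimal element
    obtain ⟨x, hx⟩ := hne
    obtain ⟨m, hmM, hmin⟩ :=
      zorn_le₀ (α := 𝓛ᵒᵈ) M
        (fun c hcM hc => by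
          rcases c.eq_empty_or_nonempty with rfl | ⟨y, hy⟩
          · exact ⟨x, hx, fun z hz => absurd hz (Set.notMem_empty z)⟩
          · obtain ⟨m, hmc, hm⟩ := h c ⟨y, hy⟩ hc.symm
            exact ⟨m, hcM hmc, fun z hz => hm z hz⟩)
    set m' : 𝓛 := OrderDual.ofDual m with hm'
    refine ⟨m', hmM, fun z hz => ?_⟩
    have h1 : m' ⊓ z ∈ M := hcl m' hmM z hz
    have h2 : m' ≤ m' ⊓ z := hmin h1 (inf_le_left : m' ⊓ z ≤ m')
    exact h2.trans inf_le_right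
  tfae_have 3 → 4 := fun h M hne hcl _ => h M hne hcl
  tfae_have 4 → 1 := by
    intro h C hCne hch S hSC hSne
    set M : Set 𝓛 := {b | ∃ a ∈ S, a ≤ b} with hM
    have hclose : ∀ i ∈ M, ∀ j ∈ M, i ⊓ j ∈ M := by
      rintro i ⟨a, haS, hai⟩ j ⟨b, hbS, hbj⟩
      rcases eq_or_ne a b with rfl | hab
      · exact ⟨a, haS, le_inf hai hbj⟩
      · rcases hch (hSC haS) (hSC hbS) hab with hle | hle
        · exact ⟨a, haS, le_inf hai (hle.trans hbj)⟩
        · exact ⟨b, hbS, le_inf (hle.trans hai) hbj⟩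
    have hup : ∀ a ∈ M, ∀ b, a ≤ b → b ∈ M := by
      rintro i ⟨a, haS, hai⟩ b hib
      exact ⟨a, haS, hai.trans hib⟩
    obtain ⟨s, hs⟩ := hSne
    obtain ⟨m, hmM, hm⟩ := h M ⟨s, s, hs, le_rfl⟩ hclose hup
    obtain ⟨a, haS, ham⟩ := hmM
    exact ⟨a, haS, fun x hx => ham.trans (hm x ⟨x, hx, le_rfl⟩)⟩
  tfae_finish
end

section
/- Let 𝓛₁ and 𝓛₂ be meet-semilattices and let the C*-algebra 𝔄 carry an 𝓛₁-grading (A_i)_{i∈𝓛₁} and an 𝓛₂-grading (B_j)_{j∈𝓛₂}. If the linear span of ⋃_{(i,j)∈𝓛₁×𝓛₂} (A_i ∩ B_j) is dense in 𝔄, then the family (A_i ∩ B_j)_{(i,j)∈𝓛₁×𝓛₂}, indexed by the product semilattice 𝓛₁ × 𝓛₂ (ordered componentwise, so that (i,j) ∧ (k,l) = (i∧k, j∧l)), is an (𝓛₁×𝓛₂)-grading of 𝔄: it is linearly independent, total, and satisfies (A_i ∩ B_j)·(A_k ∩ B_l) ⊆ A_{i∧k} ∩ B_{j∧l} for all i,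 k ∈ 𝓛₁ and j, l ∈ 𝓛₂. -/
theorem stmt_4
    {𝓛₁ 𝓛₂ : Type*} [SemilatticeInf 𝓛₁] [SemilatticeInf 𝓛₂]
    {𝔄 : Type*} [NonUnitalNormedRing 𝔄] [StarRing 𝔄] [CStarRing 𝔄]
    [NormedSpace ℂ 𝔄] [IsScalarTower ℂ 𝔄 𝔄] [SMulCommClass ℂ 𝔄 𝔄]
    [StarModule ℂ 𝔄] [CompleteSpace 𝔄]
    (A : 𝓛₁ → NonUnitalStarSubalgebra ℂ 𝔄)
    (hA_closed : ∀ i : 𝓛₁, IsClosed ((A i : Set 𝔄)))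
    (hA_indep : ∀ (s : Finset 𝓛₁) (x : 𝓛₁ → 𝔄), (∀ i, x i ∈ A i) →
        ∑ i ∈ s, x i = 0 → ∀ i ∈ s, x i = 0)
    (hA_total : closure ((Submodule.span ℂ (⋃ i : 𝓛₁, (A i : Set 𝔄)) : Submodule ℂ 𝔄) : Set 𝔄) = Set.univ)
    (hA_mul : ∀ i j : 𝓛₁, ∀ x ∈ A i, ∀ y ∈ A j, x * y ∈ A (i ⊓ j))
    (B : 𝓛₂ → NonUnitalStarSubalgebra ℂ 𝔄)
    (hB_closed : ∀ i : 𝓛₂, IsClosed ((B i : Set 𝔄)))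
    (hB_indep : ∀ (s : Finset 𝓛₂) (x : 𝓛₂ → 𝔄), (∀ i, x i ∈ B i) →
        ∑ i ∈ s, x i = 0 → ∀ i ∈ s, x i = 0)
    (hB_total : closure ((Submodule.span ℂ (⋃ i : 𝓛₂, (B i : Set 𝔄)) : Submodule ℂ 𝔄) : Set 𝔄) = Set.univ)
    (hB_mul : ∀ i j : 𝓛₂, ∀ x ∈ B i, ∀ y ∈ B j, x * y ∈ B (i ⊓ j))
    (hdense : closure ((Submodule.span ℂ
        (⋃ p : 𝓛₁ × 𝓛₂, ((A p.1 : Set 𝔄) ∩ (B p.2 : Set 𝔄))) : Submodule ℂ 𝔄) : Set 𝔄)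
      = Set.univ) :
    (∀ (s : Finset (𝓛₁ × 𝓛₂)) (x : 𝓛₁ × 𝓛₂ → 𝔄),
        (∀ p : 𝓛₁ × 𝓛₂, x p ∈ (A p.1 : Set 𝔄) ∩ (B p.2 : Set 𝔄)) →
        ∑ p ∈ s, x p = 0 → ∀ p ∈ s, x p = 0) ∧
    (closure ((Submodule.span ℂ
        (⋃ p : 𝓛₁ × 𝓛₂, ((A p.1 : Set 𝔄) ∩ (B p.2 : Set 𝔄))) : Submodule ℂ 𝔄) : Set 𝔄)
      = Set.univ) ∧
    (∀ (i k : 𝓛₁) (j l : 𝓛₂), ∀ x ∈ (A i : Set 𝔄) ∩ (B j : Set 𝔄),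
        ∀ y ∈ (A k : Set 𝔄) ∩ (B l : Set 𝔄),
        x * y ∈ (A (i ⊓ k) : Set 𝔄) ∩ (B (j ⊓ l) : Set 𝔄)) := by
  classical
  refine ⟨?_, hdense, ?_⟩
  · intro s x hx hsum p hp
    -- group by first coordinate
    set y : 𝓛₁ → 𝔄 := fun i => ∑ q ∈ s.filter (fun q => q.1 = i), x q with hy
    have hyA : ∀ i, y i ∈ A i := by
      intro i
      refine sum_mem fun q hq => ?_
      rw [Finset.mem_filter] at hq
      have := (hx q).1
      rw [hq.2] at this
      exact this
    have hysum : ∑ i ∈ s.image Prod.fst, y i = 0 := by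
      rw [hy, ← hsum]
      exact (Finset.sum_fiberwise_of_maps_to (fun q hq => Finset.mem_image_of_mem _ hq) x)
    have hy0 : y p.1 = 0 :=
      hA_indep (s.image Prod.fst) y hyA hysum p.1 (Finset.mem_image_of_mem _ hp)
    -- now within fiber p.1, group by second coordinate
    set t := s.filter (fun q => q.1 = p.1) with ht
    set z : 𝓛₂ → 𝔄 := fun j => if (p.1, j) ∈ s then x (p.1, j) else 0 with hz
    have hzB : ∀ j, z j ∈ B j := by
      intro j
      rw [hz]
      dsimp only
      split
      · exact (hx (p.1, j)).2
      · exact zero_mem _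
    have hinj : Set.InjOn Prod.snd (t : Set (𝓛₁ × 𝓛₂)) := by
      intro a ha b hb hab
      simp only [ht, Finset.coe_filter, Set.mem_setOf_eq] at ha hb
      exact Prod.ext (ha.2.trans hb.2.symm) hab
    have hzsum : ∑ j ∈ t.image Prod.snd, z j = 0 := by
      rw [Finset.sum_image (fun a ha b hb h => hinj ha hb h)]
      rw [← hy0, hy]
      refine Finset.sum_congr rfl fun q hq => ?_
      rw [Finset.mem_filter] at hq
      rw [hz]
      dsimp only
      have hq1 : (p.1, q.2) = q := Prod.ext hq.2.symm rfl
      rw [hq1, if_pos hq.1]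
    have hz0 : z p.2 = 0 := by
      refine hB_indep (t.image Prod.snd) z hzB hzsum p.2 ?_
      refine Finset.mem_image_of_mem _ ?_
      rw [ht, Finset.mem_filter]
      exact ⟨hp, rfl⟩
    rw [hz] at hz0
    simpa [hp] using hz0
  · rintro i k j l x ⟨hxA, hxB⟩ y ⟨hyA, hyB⟩
    exact ⟨hA_mul i k x hxA y hyA, hB_mul j l x hxB y hyB⟩
end

section
/- Let (𝔄,(A_i)_{i∈𝓛}) be an 𝓛-graded C*-algebra. Then 𝔄 is commutative if and only if A_i is commutative for every i ∈ 𝓛. -/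
open scoped ComplexStarModule

section Aux

variable {B : Type*} [NonUnitalCStarAlgebra B]

/-- If `s, t` are selfadjoint and `(s²t²)(t²s²) = (t²s²)(s²t²)`, then `s²t² = t²s²`. -/
lemma aux_sq_comm {s t : B} (hs : IsSelfAdjoint s) (ht : IsSelfAdjoint t)
    (hn : ((s*s)*(t*t)) * ((t*t)*(s*s)) = ((t*t)*(s*s)) * ((s*s)*(t*t))) :
    (s*s)*(t*t) = (t*t)*(s*s) := by
  have hxy_star : star ((s*s)*(t*t)) = (t*t)*(s*s) := by
    simp only [star_mul, hs.star_eq, ht.star_eq, mul_assoc]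
  haveI hN : IsStarNormal ((s*s)*(t*t)) := ⟨by
    rw [Commute, SemiconjBy, hxy_star]; exact hn.symm⟩
  have hQ : QuasispectrumRestricts ((s*s)*(t*t)) Complex.reCLM := by
    refine ⟨fun z hz => ?_, Complex.ofReal_re⟩
    rw [Unitization.quasispectrum_eq_spectrum_inr' ℂ ℂ] at hz
    rcases eq_or_ne z 0 with rfl | hz0
    · simp
    · set S : Unitization ℂ B := (s : Unitization ℂ B)
      set T : Unitization ℂ B := (t : Unitization ℂ B)
      have e1 : (((s*s)*(t*t) : B) : Unitization ℂ B) = S * (S * T * T) := by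
        simp only [Unitization.inr_mul, mul_assoc]
        rfl
      have e2 : (S * T * T) * S = star (T * S) * (T * S) := by
        have hS : star S = S := by
          simpa [S] using congrArg (fun b : B => (b : Unitization ℂ B)) hs.star_eq
        have hT : star T = T := by
          simpa [T] using congrArg (fun b : B => (b : Unitization ℂ B)) ht.star_eq
        rw [star_mul, hS, hT]
        simp only [mul_assoc]
      have hz' : z ∈ spectrum ℂ (star (T * S) * (T * S)) \ {0} := by
        rw [← e2, ← spectrum.nonzero_mul_comm S (S * T * T)]
        rw [e1] at hz
        exact ⟨hz, hz0⟩
      exact (IsSelfAdjoint.star_mul_self (T * S)).spectrumRestricts.rightInvOn hz'.1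
  have hsa : IsSelfAdjoint ((s*s)*(t*t)) := hQ.isSelfAdjoint _
  calc (s*s)*(t*t) = star ((s*s)*(t*t)) := hsa.star_eq.symm
    _ = (t*t)*(s*s) := hxy_star

/-- Every selfadjoint element is a difference of two squares of selfadjoint elements. -/
lemma aux_decomp_sa {b : B} (hb : IsSelfAdjoint b) :
    ∃ u v : B, IsSelfAdjoint u ∧ IsSelfAdjoint v ∧ b = u*u - v*v := by
  let f : ℝ → ℝ := fun r => Real.sqrt (max r 0)
  let g : ℝ → ℝ := fun r => Real.sqrt (max (-r) 0)
  have hfc : Continuous f := Real.continuous_sqrt.comp (continuous_id.max continuous_const)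
  have hgc : Continuous g := Real.continuous_sqrt.comp (continuous_neg.max continuous_const)
  have hf0 : f 0 = 0 := by simp [f]
  have hg0 : g 0 = 0 := by simp [g]
  refine ⟨cfcₙ f b, cfcₙ g b, cfcₙ_predicate f b, cfcₙ_predicate g b, ?_⟩
  have h1 : cfcₙ f b * cfcₙ f b = cfcₙ (fun r => f r * f r) b :=
    (cfcₙ_mul f f b hfc.continuousOn hf0 hfc.continuousOn hf0).symm
  have h2 : cfcₙ g b * cfcₙ g b = cfcₙ (fun r => g r * g r) b :=
    (cfcₙ_mul g g b hgc.continuousOn hg0 hgc.continuousOn hg0).symm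
  have h3 : cfcₙ (fun r => f r * f r) b - cfcₙ (fun r => g r * g r) b
      = cfcₙ (fun r => f r * f r - g r * g r) b :=
    (cfcₙ_sub _ _ b ((hfc.mul hfc).continuousOn) (by simp [hf0])
      ((hgc.mul hgc).continuousOn) (by simp [hg0])).symm
  have h4 : (fun r : ℝ => f r * f r - g r * g r) = fun r : ℝ => r := by
    funext r
    simp only [f, g, Real.mul_self_sqrt (le_max_right r 0),
      Real.mul_self_sqrt (le_max_right (-r) 0)]
    rcases le_total r 0 with h | h
    · rw [max_eq_right h, max_eq_left (by linarith)]; ring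
    · rw [max_eq_left h, max_eq_right (by linarith)]; ring
  rw [h1, h2, h3, h4, cfcₙ_id' ℝ b]

/-- Every element is a combination of four squares of selfadjoint elements. -/
lemma aux_decomp (a : B) : ∃ v : Fin 4 → B, (∀ k, IsSelfAdjoint (v k)) ∧
    a = (v 0 * v 0 - v 1 * v 1) + Complex.I • (v 2 * v 2 - v 3 * v 3) := by
  obtain ⟨u1, w1, hu1, hw1, h1⟩ := aux_decomp_sa (ℜ a).2
  obtain ⟨u2, w2, hu2, hw2, h2⟩ := aux_decomp_sa (ℑ a).2
  refine ⟨![u1, w1, u2, w2], ?_, ?_⟩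
  · intro k
    fin_cases k <;> simpa
  · have := realPart_add_I_smul_imaginaryPart a
    simp only [Matrix.cons_val_zero, Matrix.cons_val_one, Matrix.head_cons,
      Matrix.cons_val_two, Matrix.tail_cons, Matrix.cons_val_three]
    rw [← h1, ← h2, this]

end Aux

theorem stmt_14
    {𝓛 : Type*} [SemilatticeInf 𝓛]
    {𝔄 : Type*} [NonUnitalNormedRing 𝔄] [StarRing 𝔄] [CStarRing 𝔄]
    [NormedSpace ℂ 𝔄] [IsScalarTower ℂ 𝔄 𝔄] [SMulCommClass ℂ 𝔄 𝔄]
    [StarModule ℂ 𝔄] [CompleteSpace 𝔄]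
    (A : 𝓛 → NonUnitalStarSubalgebra ℂ 𝔄)
    (hA_closed : ∀ i : 𝓛, IsClosed ((A i : Set 𝔄)))
    (hA_indep : ∀ (s : Finset 𝓛) (x : 𝓛 → 𝔄), (∀ i, x i ∈ A i) →
        ∑ i ∈ s, x i = 0 → ∀ i ∈ s, x i = 0)
    (hA_total : closure ((Submodule.span ℂ (⋃ i : 𝓛, (A i : Set 𝔄)) : Submodule ℂ 𝔄) : Set 𝔄) = Set.univ)
    (hA_mul : ∀ i j : 𝓛, ∀ x ∈ A i, ∀ y ∈ A j, x * y ∈ A (i ⊓ j)) :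
    (∀ x y : 𝔄, x * y = y * x) ↔ (∀ i : 𝓛, ∀ x ∈ A i, ∀ y ∈ A i, x * y = y * x) := by
  constructor
  · exact fun h i x _ y _ => h x y
  intro hcomm
  letI : NonUnitalCStarAlgebra 𝔄 :=
    { ‹NonUnitalNormedRing 𝔄›, ‹StarRing 𝔄›, ‹CStarRing 𝔄›,
      ‹NormedSpace ℂ 𝔄›, ‹IsScalarTower ℂ 𝔄 𝔄›, ‹SMulCommClass ℂ 𝔄 𝔄›,
      ‹StarModule ℂ 𝔄›, ‹CompleteSpace 𝔄› with }
  -- squares of selfadjoint elements from different components commute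
  have base : ∀ (i j : 𝓛) (s t : 𝔄), s ∈ A i → t ∈ A j → IsSelfAdjoint s → IsSelfAdjoint t →
      (s*s)*(t*t) = (t*t)*(s*s) := by
    intro i j s t hsA htA hs ht
    have hx : s*s ∈ A i := by simpa using hA_mul i i s hsA s hsA
    have hy : t*t ∈ A j := by simpa using hA_mul j j t htA t htA
    have hxy : (s*s)*(t*t) ∈ A (i ⊓ j) := hA_mul i j _ hx _ hy
    have hyx : (t*t)*(s*s) ∈ A (i ⊓ j) := by
      have := hA_mul j i _ hy _ hx
      rwa [inf_comm] at this
    exact aux_sq_comm hs ht (hcomm (i ⊓ j) _ hxy _ hyx)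
  -- decomposition of an element of a component into squares of selfadjoints in that component
  have decomp : ∀ (i : 𝓛), ∀ x ∈ A i, ∃ v : Fin 4 → 𝔄,
      (∀ k, v k ∈ A i) ∧ (∀ k, IsSelfAdjoint (v k)) ∧
      x = (v 0 * v 0 - v 1 * v 1) + Complex.I • (v 2 * v 2 - v 3 * v 3) := by
    intro i x hx
    haveI : IsClosed ((A i : Set 𝔄)) := hA_closed i
    obtain ⟨v, hv_sa, hv_eq⟩ := aux_decomp (⟨x, hx⟩ : A i)
    refine ⟨fun k => (v k : 𝔄), fun k => (v k).2, ?_, ?_⟩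
    · intro k
      exact congrArg Subtype.val (hv_sa k).star_eq
    · have := congrArg Subtype.val hv_eq
      push_cast at this
      simpa using this
  -- an element of a component commutes with squares from another component
  have step1 : ∀ (i j : 𝓛) (x : 𝔄), x ∈ A i → ∀ t ∈ A j, IsSelfAdjoint t →
      x*(t*t) = (t*t)*x := by
    intro i j x hx t htA ht
    obtain ⟨v, hvA, hvsa, hveq⟩ := decomp i x hx
    have h0 := base i j (v 0) t (hvA 0) htA (hvsa 0) ht
    have h1 := base i j (v 1) t (hvA 1) htA (hvsa 1) ht
    have h2 := base i j (v 2) t (hvA 2) htA (hvsa 2) ht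
    have h3 := base i j (v 3) t (hvA 3) htA (hvsa 3) ht
    rw [hveq]
    simp only [add_mul, mul_add, sub_mul, mul_sub, smul_mul_assoc, mul_smul_comm,
      h0, h1, h2, h3]
  -- elements from any two components commute
  have step2 : ∀ (i j : 𝓛) (x : 𝔄), x ∈ A i → ∀ y ∈ A j, x*y = y*x := by
    intro i j x hx y hy
    obtain ⟨w, hwA, hwsa, hweq⟩ := decomp j y hy
    have h0 := step1 i j x hx (w 0) (hwA 0) (hwsa 0)
    have h1 := step1 i j x hx (w 1) (hwA 1) (hwsa 1)
    have h2 := step1 i j x hx (w 2) (hwA 2) (hwsa 2)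
    have h3 := step1 i j x hx (w 3) (hwA 3) (hwsa 3)
    rw [hweq]
    simp only [add_mul, mul_add, sub_mul, mul_sub, smul_mul_assoc, mul_smul_comm,
      h0, h1, h2, h3]
  -- a component element commutes with everything, by density
  have half : ∀ (i : 𝓛) (x : 𝔄), x ∈ A i → ∀ y : 𝔄, x * y = y * x := by
    intro i x hx y
    have hcl : IsClosed {y : 𝔄 | x * y = y * x} :=
      isClosed_eq (continuous_mul_left x) (continuous_mul_right x)
    have hspan : ((Submodule.span ℂ (⋃ j : 𝓛, (A j : Set 𝔄)) : Submodule ℂ 𝔄) : Set 𝔄)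
        ⊆ {y : 𝔄 | x * y = y * x} := by
      intro z hz
      induction hz using Submodule.span_induction with
      | mem z hz =>
        obtain ⟨_, ⟨j, rfl⟩, hzj⟩ := hz
        exact step2 i j x hx z hzj
      | zero => simp
      | add a b _ _ ha hb =>
        show x * (a + b) = (a + b) * x
        rw [mul_add, add_mul, ha, hb]
      | smul c a _ ha =>
        show x * (c • a) = (c • a) * x
        rw [mul_smul_comm, smul_mul_assoc, ha]
    have hy : y ∈ closure ((Submodule.span ℂ (⋃ j : 𝓛, (A j : Set 𝔄)) : Submodule ℂ 𝔄) : Set 𝔄) :=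
      hA_total ▸ Set.mem_univ y
    exact closure_minimal hspan hcl hy
  -- conclude by density again
  intro x y
  have hcl : IsClosed {x : 𝔄 | x * y = y * x} :=
    isClosed_eq (continuous_mul_right y) (continuous_mul_left y)
  have hspan : ((Submodule.span ℂ (⋃ j : 𝓛, (A j : Set 𝔄)) : Submodule ℂ 𝔄) : Set 𝔄)
      ⊆ {x : 𝔄 | x * y = y * x} := by
    intro z hz
    induction hz using Submodule.span_induction with
    | mem z hz =>
      obtain ⟨_, ⟨j, rfl⟩, hzj⟩ := hz
      exact half j z hzj y
    | zero => simp
    | add a b _ _ ha hb =>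
      show (a + b) * y = y * (a + b)
      rw [mul_add, add_mul, ha, hb]
    | smul c a _ ha =>
      show (c • a) * y = y * (c • a)
      rw [mul_smul_comm, smul_mul_assoc, ha]
  have hx : x ∈ closure ((Submodule.span ℂ (⋃ j : 𝓛, (A j : Set 𝔄)) : Submodule ℂ 𝔄) : Set 𝔄) :=
    hA_total ▸ Set.mem_univ x
  exact closure_minimal hspan hcl hx
end

section
/- Let 𝓛 be a good meet-semilattice (every nonempty subset of 𝓛 closed under ∧ has a least element) and (𝔄,(A_i)_{i∈𝓛}) an 𝓛-graded commutative C*-algebra. Let χ : 𝔄 → ℂ be a character (a nonzero continuous algebra homomorphism). Then the set S = {i ∈ 𝓛 : χ does not vanish identically on A_i} is nonempty, closed under ∧, and has a least element i₀; χ vanishes on A_j for every j ∈ 𝓛 with ¬(i₀ ≤ j); and χ is determined by its restriction to A_{i₀}: if χ' is another character of 𝔄 that agrees with χ on A_{i₀} and vanishes on A_j for every j with ¬(i₀ ≤ j), then χ' = χ. -/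
theorem stmt_15
    {𝓛 : Type*} [SemilatticeInf 𝓛]
    {𝔄 : Type*} [NonUnitalNormedRing 𝔄] [StarRing 𝔄] [CStarRing 𝔄]
    [NormedSpace ℂ 𝔄] [IsScalarTower ℂ 𝔄 𝔄] [SMulCommClass ℂ 𝔄 𝔄]
    [StarModule ℂ 𝔄] [CompleteSpace 𝔄]
    (A : 𝓛 → NonUnitalStarSubalgebra ℂ 𝔄)
    (hA_closed : ∀ i : 𝓛, IsClosed ((A i : Set 𝔄)))
    (hA_indep : ∀ (s : Finset 𝓛) (x : 𝓛 → 𝔄), (∀ i, x i ∈ A i) →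
        ∑ i ∈ s, x i = 0 → ∀ i ∈ s, x i = 0)
    (hA_total : closure ((Submodule.span ℂ (⋃ i : 𝓛, (A i : Set 𝔄)) : Submodule ℂ 𝔄) : Set 𝔄) = Set.univ)
    (hA_mul : ∀ i j : 𝓛, ∀ x ∈ A i, ∀ y ∈ A j, x * y ∈ A (i ⊓ j))
    (hgood : ∀ M : Set 𝓛, M.Nonempty → (∀ i ∈ M, ∀ j ∈ M, i ⊓ j ∈ M) →
        ∃ m ∈ M, ∀ x ∈ M, m ≤ x)
    (hcomm : ∀ x y : 𝔄, x * y = y * x)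
    (χ : 𝔄 →ₙₐ[ℂ] ℂ) (hχ_cont : Continuous χ) (hχ_ne : χ ≠ 0) :
    ({i : 𝓛 | ∃ x ∈ A i, χ x ≠ 0}.Nonempty) ∧
    (∀ i ∈ {i : 𝓛 | ∃ x ∈ A i, χ x ≠ 0}, ∀ j ∈ {i : 𝓛 | ∃ x ∈ A i, χ x ≠ 0},
        i ⊓ j ∈ {i : 𝓛 | ∃ x ∈ A i, χ x ≠ 0}) ∧
    (∃ i₀ ∈ {i : 𝓛 | ∃ x ∈ A i, χ x ≠ 0},
      (∀ i ∈ {i : 𝓛 | ∃ x ∈ A i, χ x ≠ 0}, i₀ ≤ i) ∧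
      (∀ j : 𝓛, ¬ i₀ ≤ j → ∀ x ∈ A j, χ x = 0) ∧
      (∀ χ' : 𝔄 →ₙₐ[ℂ] ℂ, Continuous χ' → χ' ≠ 0 →
        (∀ x ∈ A i₀, χ' x = χ x) →
        (∀ j : 𝓛, ¬ i₀ ≤ j → ∀ x ∈ A j, χ' x = 0) → χ' = χ)) := by

  classical
  set S : Set 𝓛 := {i : 𝓛 | ∃ x ∈ A i, χ x ≠ 0} with hS
  -- χ vanishes on a closed set containing the span if it vanishes on the union
  have hne : S.Nonempty := by
    by_contra h
    apply hχ_ne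
    have hvan : ∀ i : 𝓛, ∀ x ∈ A i, χ x = 0 := by
      intro i x hx
      by_contra hxe
      exact h ⟨i, x, hx, hxe⟩
    have hsub : (⋃ i : 𝓛, (A i : Set 𝔄)) ⊆ (LinearMap.ker (χ : 𝔄 →ₗ[ℂ] ℂ) : Set 𝔄) := by
      rintro x hx
      rcases Set.mem_iUnion.mp hx with ⟨i, hi⟩
      exact hvan i x hi
    have hspan : (Submodule.span ℂ (⋃ i : 𝓛, (A i : Set 𝔄)) : Set 𝔄) ⊆ {x | χ x = 0} :=
      Submodule.span_le.mpr hsub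
    have hclosed : IsClosed {x : 𝔄 | χ x = 0} := isClosed_eq hχ_cont continuous_const
    have hall : ∀ x : 𝔄, χ x = 0 := by
      intro x
      have : x ∈ closure ((Submodule.span ℂ (⋃ i : 𝓛, (A i : Set 𝔄)) : Submodule ℂ 𝔄) : Set 𝔄) := by
        rw [hA_total]; trivial
      exact closure_minimal hspan hclosed this
    ext x
    simp [hall x]
  have hinf : ∀ i ∈ S, ∀ j ∈ S, i ⊓ j ∈ S := by
    rintro i ⟨x, hx, hxe⟩ j ⟨y, hy, hye⟩
    exact ⟨x * y, hA_mul i j x hx y hy, by simp [map_mul, hxe, hye]⟩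
  obtain ⟨i₀, hi₀S, hi₀min⟩ := hgood S hne hinf
  refine ⟨hne, hinf, i₀, hi₀S, hi₀min, ?_, ?_⟩
  · intro j hj x hx
    by_contra hxe
    exact hj (hi₀min j ⟨x, hx, hxe⟩)
  · intro χ' hχ'_cont hχ'_ne hagree hvan'
    have hvanχ : ∀ j : 𝓛, ¬ i₀ ≤ j → ∀ x ∈ A j, χ x = 0 := by
      intro j hj x hx
      by_contra hxe
      exact hj (hi₀min j ⟨x, hx, hxe⟩)
    obtain ⟨a, ha, hae⟩ := hi₀S
    have hagree_all : ∀ i : 𝓛, ∀ x ∈ A i, χ' x = χ x := by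
      intro i x hx
      by_cases hle : i₀ ≤ i
      · have hax : a * x ∈ A i₀ := by
          have := hA_mul i₀ i a ha x hx
          rwa [inf_eq_left.mpr hle] at this
        have h1 : χ' a * χ' x = χ a * χ x := by
          have := hagree (a * x) hax
          rwa [map_mul, map_mul] at this
        have h2 : χ' a = χ a := hagree a ha
        rw [h2] at h1
        exact mul_left_cancel₀ hae h1
      · rw [hvan' i hle x hx, hvanχ i hle x hx]
    have hsub : (⋃ i : 𝓛, (A i : Set 𝔄)) ⊆
        (LinearMap.ker ((χ' : 𝔄 →ₗ[ℂ] ℂ) - (χ : 𝔄 →ₗ[ℂ] ℂ)) : Set 𝔄) := by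
      rintro x hx
      rcases Set.mem_iUnion.mp hx with ⟨i, hi⟩
      simp only [SetLike.mem_coe, LinearMap.mem_ker, LinearMap.sub_apply]
      show χ' x - χ x = 0
      rw [hagree_all i x hi, sub_self]
    have hspan : (Submodule.span ℂ (⋃ i : 𝓛, (A i : Set 𝔄)) : Set 𝔄) ⊆ {x | χ' x = χ x} := by
      intro x hx
      have := Submodule.span_le.mpr hsub hx
      simp only [SetLike.mem_coe, LinearMap.mem_ker, LinearMap.sub_apply] at this
      exact sub_eq_zero.mp this
    have hclosed : IsClosed {x : 𝔄 | χ' x = χ x} := isClosed_eq hχ'_cont hχ_cont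
    have hall : ∀ x : 𝔄, χ' x = χ x := by
      intro x
      have : x ∈ closure ((Submodule.span ℂ (⋃ i : 𝓛, (A i : Set 𝔄)) : Submodule ℂ 𝔄) : Set 𝔄) := by
        rw [hA_total]; trivial
      exact closure_minimal hspan hclosed this
    ext x
    exact hall x
end

section
/- Let G be a locally compact Hausdorff topological group and H, K closed subgroups of G. The following are equivalent: (ii) the injective continuous map q : G/(H∩K) → G/H × G/K sending the coset g(H∩K) to (gH, gK) is a closed map; (iii) the set HK = {hk : h ∈ H, k ∈ K} is closed in G and the multiplication map H × K → HK, (h,k) ↦ hk, is open onto HK equipped with the subspace topology; (iv) the image p_H(K) of K under the quotient map p_H : G → G/H is closed in G/H and the restricted map K → p_H(K), k ↦ kH, is open onto p_H(K) equipped with the subspace topology; (v) the image p_K(H) of H in G/K is closed and the restricted map H → p_K(H), h ↦ hK, is open onto p_K(H). -/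
open scoped Pointwise
open Filter Set Topology

section AuxStmt16

variable {G : Type*} [Group G] [TopologicalSpace G] [IsTopologicalGroup G]

/-- Openness of the multiplication map `A × B → A*B`, expressed at the identity. -/
def PBst (A B : Subgroup G) : Prop :=
  ∀ U ∈ 𝓝 (1:G), ∀ V ∈ 𝓝 (1:G), ∃ O ∈ 𝓝 (1:G),
    O ∩ ((A : Set G) * (B : Set G)) ⊆ ((A : Set G) ∩ U) * ((B : Set G) ∩ V)

/-- Openness of the map `B → p_A(B)`, expressed at the identity. -/
def PCst (A B : Subgroup G) : Prop :=
  ∀ V ∈ 𝓝 (1:G), ∃ O ∈ 𝓝 (1:G),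
    O ∩ ((B : Set G) * (A : Set G)) ⊆ (((B : Set G) ∩ V) * (A : Set G))

/-- Openness of `q` onto its image, expressed at the identity. -/
def PAst (A B : Subgroup G) : Prop :=
  ∀ W ∈ 𝓝 (1:G), ∃ O ∈ 𝓝 (1:G),
    (O * (A : Set G)) ∩ (O * (B : Set G)) ⊆ W * ((A ⊓ B : Subgroup G) : Set G)

lemma exists_sym_nhds {W : Set G} (hW : W ∈ 𝓝 (1:G)) :
    ∃ N ∈ 𝓝 (1:G), N⁻¹ * N ⊆ W := by
  obtain ⟨V, hVo, hV1, hVV⟩ := exists_open_nhds_one_mul_subset hW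
  have hVn : V ∈ 𝓝 (1:G) := hVo.mem_nhds hV1
  refine ⟨V ∩ V⁻¹, inter_mem hVn (inv_mem_nhds_one G hVn), ?_⟩
  rintro x hx
  obtain ⟨a, ha, b, hb, rfl⟩ := Set.mem_mul.1 hx
  have ha' : a ∈ V := by
    have := (Set.mem_inv.1 ha).2
    rwa [Set.mem_inv, inv_inv] at this
  exact hVV (Set.mul_mem_mul ha' hb.1)

lemma pbst_symm {A B : Subgroup G} (h : PBst A B) : PBst B A := by
  intro U hU V hV
  obtain ⟨O, hO, hsub⟩ := h V⁻¹ (inv_mem_nhds_one G hV) U⁻¹ (inv_mem_nhds_one G hU)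
  refine ⟨O⁻¹, inv_mem_nhds_one G hO, ?_⟩
  rintro x ⟨hxO, hxBA⟩
  obtain ⟨b, hb, a, ha, rfl⟩ := Set.mem_mul.1 hxBA
  have hx : a⁻¹ * b⁻¹ ∈ O ∩ ((A : Set G) * (B : Set G)) := by
    refine ⟨?_, Set.mul_mem_mul (A.inv_mem ha) (B.inv_mem hb)⟩
    have : (b * a)⁻¹ ∈ O := Set.mem_inv.1 hxO
    rwa [mul_inv_rev] at this
  obtain ⟨a', ⟨ha'A, ha'V⟩, b', ⟨hb'B, hb'U⟩, heq⟩ := Set.mem_mul.1 (hsub hx)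
  refine Set.mem_mul.2 ⟨b'⁻¹, ⟨B.inv_mem hb'B, Set.mem_inv.1 hb'U⟩,
    a'⁻¹, ⟨A.inv_mem ha'A, Set.mem_inv.1 ha'V⟩, ?_⟩
  have : (a' * b')⁻¹ = (a⁻¹ * b⁻¹)⁻¹ := by rw [heq]
  rwa [mul_inv_rev, mul_inv_rev, inv_inv, inv_inv] at this

lemma pbst_to_pcst {A B : Subgroup G} (h : PBst A B) : PCst A B := by
  intro V hV
  obtain ⟨O, hO, hsub⟩ := h Set.univ univ_mem V⁻¹ (inv_mem_nhds_one G hV)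
  refine ⟨O⁻¹, inv_mem_nhds_one G hO, ?_⟩
  rintro x ⟨hxO, hxBA⟩
  obtain ⟨b, hb, a, ha, rfl⟩ := Set.mem_mul.1 hxBA
  have hx : a⁻¹ * b⁻¹ ∈ O ∩ ((A : Set G) * (B : Set G)) := by
    refine ⟨?_, Set.mul_mem_mul (A.inv_mem ha) (B.inv_mem hb)⟩
    have : (b * a)⁻¹ ∈ O := Set.mem_inv.1 hxO
    rwa [mul_inv_rev] at this
  obtain ⟨a', ⟨ha'A, _⟩, b', ⟨hb'B, hb'V⟩, heq⟩ := Set.mem_mul.1 (hsub hx)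
  refine Set.mem_mul.2 ⟨b'⁻¹, ⟨B.inv_mem hb'B, Set.mem_inv.1 hb'V⟩, a'⁻¹, A.inv_mem ha'A, ?_⟩
  have : (a' * b')⁻¹ = (a⁻¹ * b⁻¹)⁻¹ := by rw [heq]
  rwa [mul_inv_rev, mul_inv_rev, inv_inv, inv_inv] at this

lemma pcst_to_pbst {A B : Subgroup G} (h : PCst A B) : PBst A B := by
  intro U hU V hV
  obtain ⟨N, hN, hNU⟩ := exists_sym_nhds (inv_mem_nhds_one G hU)
  obtain ⟨O₁, hO₁, h₁⟩ := h (V⁻¹ ∩ N) (inter_mem (inv_mem_nhds_one G hV) hN)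
  refine ⟨(O₁ ∩ N)⁻¹, inv_mem_nhds_one G (inter_mem hO₁ hN), ?_⟩
  rintro x ⟨hxO, hxAB⟩
  obtain ⟨a, ha, b, hb, rfl⟩ := Set.mem_mul.1 hxAB
  have hxinv : b⁻¹ * a⁻¹ ∈ (O₁ ∩ N) ∩ ((B : Set G) * (A : Set G)) := by
    refine ⟨?_, Set.mul_mem_mul (B.inv_mem hb) (A.inv_mem ha)⟩
    have : (a * b)⁻¹ ∈ O₁ ∩ N := Set.mem_inv.1 hxO
    rwa [mul_inv_rev] at this
  obtain ⟨b', ⟨hb'B, hb'VN⟩, a', ha'A, heq⟩ := Set.mem_mul.1 (h₁ ⟨hxinv.1.1, hxinv.2⟩)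
  -- a' = b'⁻¹ * (b⁻¹ * a⁻¹) ∈ N⁻¹ * N ⊆ U⁻¹
  have hxN : b⁻¹ * a⁻¹ ∈ N := hxinv.1.2
  have ha'U : a' ∈ U⁻¹ := by
    have ha'eq : a' = b'⁻¹ * (b⁻¹ * a⁻¹) := by
      rw [← heq]; simp [mul_assoc]
    rw [ha'eq]
    exact hNU (Set.mul_mem_mul (Set.inv_mem_inv.2 hb'VN.2) hxN)
  refine Set.mem_mul.2 ⟨a'⁻¹, ⟨A.inv_mem ha'A, Set.mem_inv.1 ha'U⟩,
    b'⁻¹, ⟨B.inv_mem hb'B, Set.mem_inv.1 hb'VN.1⟩, ?_⟩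
  have : (b' * a')⁻¹ = (b⁻¹ * a⁻¹)⁻¹ := by rw [heq]
  rwa [mul_inv_rev, mul_inv_rev, inv_inv, inv_inv] at this

lemma pbst_to_past {A B : Subgroup G} (h : PBst A B) : PAst A B := by
  intro W hW
  obtain ⟨W', hW'o, hW'1, hW'W⟩ := exists_open_nhds_one_mul_subset hW
  have hW'n : W' ∈ 𝓝 (1:G) := hW'o.mem_nhds hW'1
  obtain ⟨O, hO, hsub⟩ := h W' hW'n Set.univ univ_mem
  obtain ⟨N, hN, hNO⟩ := exists_sym_nhds hO
  refine ⟨N ∩ W', inter_mem hN hW'n, ?_⟩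
  rintro x ⟨hx1, hx2⟩
  obtain ⟨o₁, ho₁, a, ha, hxa⟩ := Set.mem_mul.1 hx1
  obtain ⟨o₂, ho₂, b, hb, hxb⟩ := Set.mem_mul.1 hx2
  have key : a * b⁻¹ ∈ O ∩ ((A : Set G) * (B : Set G)) := by
    constructor
    · have h0 : o₁ * a = o₂ * b := by rw [hxa, hxb]
      have hab : a * b⁻¹ = o₁⁻¹ * o₂ := by
        have h2 := congrArg (fun z => o₁⁻¹ * z * b⁻¹) h0
        simpa [mul_assoc] using h2
      rw [hab]
      exact hNO (Set.mul_mem_mul (Set.inv_mem_inv.2 ho₁.1) ho₂.1)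
    · exact Set.mul_mem_mul ha (B.inv_mem hb)
  obtain ⟨u, ⟨huA, huW⟩, v, hvB, huv⟩ := Set.mem_mul.1 (hsub key)
  have hl : u⁻¹ * a ∈ A ⊓ B := by
    refine Subgroup.mem_inf.2 ⟨A.mul_mem (A.inv_mem huA) ha, ?_⟩
    have : u⁻¹ * a = v * b := by
      have h1 : u * v = a * b⁻¹ := huv
      have : v = u⁻¹ * (a * b⁻¹) := by rw [← h1]; simp [mul_assoc]
      rw [this]; simp [mul_assoc]
    rw [this]
    exact B.mul_mem hvB.1 hb
  refine Set.mem_mul.2 ⟨o₁ * u, hW'W (Set.mul_mem_mul ho₁.2 huW), u⁻¹ * a, hl, ?_⟩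
  rw [← hxa]; simp [mul_assoc]

end AuxStmt16

section Topo

variable {G : Type*} [Group G] [TopologicalSpace G] [IsTopologicalGroup G]

lemma open_mu_to_pbst {A B : Subgroup G}
    (h : IsOpenMap (fun p : A × B =>
      (⟨(p.1 : G) * (p.2 : G), Set.mul_mem_mul p.1.2 p.2.2⟩ :
        ((A : Set G) * (B : Set G) : Set G)))) : PBst A B := by
  intro U hU V hV
  set μ := fun p : A × B =>
    (⟨(p.1 : G) * (p.2 : G), Set.mul_mem_mul p.1.2 p.2.2⟩ :
      ((A : Set G) * (B : Set G) : Set G)) with hμ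
  have hSopen : IsOpen {p : A × B | (p.1 : G) ∈ interior U ∧ (p.2 : G) ∈ interior V} := by
    have : Continuous (fun p : A × B => ((p.1 : G), (p.2 : G))) :=
      (continuous_subtype_val.comp continuous_fst).prodMk
        (continuous_subtype_val.comp continuous_snd)
    exact (isOpen_interior.prod isOpen_interior).preimage this
  obtain ⟨O, hOopen, hOeq⟩ := isOpen_induced_iff.1 (h _ hSopen)
  have h11 : ((⟨1, A.one_mem⟩, ⟨1, B.one_mem⟩) : A × B) ∈
      {p : A × B | (p.1 : G) ∈ interior U ∧ (p.2 : G) ∈ interior V} :=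
    ⟨mem_interior_iff_mem_nhds.2 hU, mem_interior_iff_mem_nhds.2 hV⟩
  have h1O : (1 : G) ∈ O := by
    have : μ (⟨1, A.one_mem⟩, ⟨1, B.one_mem⟩) ∈ Subtype.val ⁻¹' O := by
      rw [hOeq]; exact Set.mem_image_of_mem μ h11
    simpa [hμ] using this
  refine ⟨O, hOopen.mem_nhds h1O, ?_⟩
  rintro x ⟨hxO, hxAB⟩
  have : (⟨x, hxAB⟩ : ((A : Set G) * (B : Set G) : Set G)) ∈ Subtype.val ⁻¹' O := hxO
  rw [hOeq] at this
  obtain ⟨⟨a, b⟩, ⟨haU, hbV⟩, heq⟩ := this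
  have hx : (a : G) * (b : G) = x := congrArg Subtype.val heq
  exact Set.mem_mul.2 ⟨a, ⟨a.2, interior_subset haU⟩, b, ⟨b.2, interior_subset hbV⟩, hx⟩

lemma pbst_to_open_mu {A B : Subgroup G} (h : PBst A B) :
    IsOpenMap (fun p : A × B =>
      (⟨(p.1 : G) * (p.2 : G), Set.mul_mem_mul p.1.2 p.2.2⟩ :
        ((A : Set G) * (B : Set G) : Set G))) := by
  set μ := fun p : A × B =>
    (⟨(p.1 : G) * (p.2 : G), Set.mul_mem_mul p.1.2 p.2.2⟩ :
      ((A : Set G) * (B : Set G) : Set G)) with hμ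
  rw [isOpenMap_iff_nhds_le]
  rintro ⟨h₀, k₀⟩ s hs
  rw [Filter.mem_map] at hs
  obtain ⟨u, hu, v, hv, huv⟩ := mem_nhds_prod_iff.1 hs
  rw [nhds_induced] at hu hv
  obtain ⟨U, hU, hUu⟩ := Filter.mem_comap.1 hu
  obtain ⟨V, hV, hVv⟩ := Filter.mem_comap.1 hv
  have hU₁ : (fun x => (h₀ : G) * x) ⁻¹' U ∈ 𝓝 (1 : G) :=
    (continuous_mul_left (h₀ : G)).continuousAt.preimage_mem_nhds (by rwa [mul_one])
  have hV₁ : (fun x => x * (k₀ : G)) ⁻¹' V ∈ 𝓝 (1 : G) :=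
    (continuous_mul_right (k₀ : G)).continuousAt.preimage_mem_nhds (by rwa [one_mul])
  obtain ⟨O, hO, hOsub⟩ := h _ hU₁ _ hV₁
  rw [nhds_induced]
  refine Filter.mem_comap.2 ⟨(fun x => (h₀ : G)⁻¹ * x * (k₀ : G)⁻¹) ⁻¹' O, ?_, ?_⟩
  · refine (((continuous_mul_left _).mul continuous_const).continuousAt).preimage_mem_nhds ?_
    simpa [hμ, inv_mul_cancel_left, mul_inv_cancel_right] using hO
  · rintro ⟨x, hxAB⟩ hxO
    obtain ⟨a, haA, b, hbB, hab⟩ := Set.mem_mul.1 hxAB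
    have hy : (h₀ : G)⁻¹ * x * (k₀ : G)⁻¹ ∈ O ∩ ((A : Set G) * (B : Set G)) := by
      refine ⟨hxO, ?_⟩
      refine Set.mem_mul.2 ⟨(h₀ : G)⁻¹ * a, A.mul_mem (A.inv_mem h₀.2) haA,
        b * (k₀ : G)⁻¹, B.mul_mem hbB (B.inv_mem k₀.2), ?_⟩
      rw [← hab]; simp [mul_assoc]
    obtain ⟨a₁, ⟨ha₁A, ha₁U⟩, b₁, ⟨hb₁B, hb₁V⟩, heq⟩ := Set.mem_mul.1 (hOsub hy)
    have hmem : ((⟨(h₀ : G) * a₁, A.mul_mem h₀.2 ha₁A⟩ : A),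
        (⟨b₁ * (k₀ : G), B.mul_mem hb₁B k₀.2⟩ : B)) ∈ u ×ˢ v :=
      ⟨hUu ha₁U, hVv hb₁V⟩
    have h2 : μ ((⟨(h₀ : G) * a₁, A.mul_mem h₀.2 ha₁A⟩ : A),
        (⟨b₁ * (k₀ : G), B.mul_mem hb₁B k₀.2⟩ : B)) ∈ s := huv hmem
    have hvaleq : μ ((⟨(h₀ : G) * a₁, A.mul_mem h₀.2 ha₁A⟩ : A),
        (⟨b₁ * (k₀ : G), B.mul_mem hb₁B k₀.2⟩ : B)) = ⟨x, hxAB⟩ := by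
      apply Subtype.ext
      show (h₀ : G) * a₁ * (b₁ * (k₀ : G)) = x
      have : (h₀ : G) * ((h₀ : G)⁻¹ * x * (k₀ : G)⁻¹) * (k₀ : G) = x := by
        simp [mul_assoc]
      rw [← this, ← heq]; simp [mul_assoc]
    rwa [hvaleq] at h2

lemma open_r_to_pcst {A B : Subgroup G}
    (h : IsOpenMap (fun k : B =>
      (⟨QuotientGroup.mk (k : G), Set.mem_image_of_mem _ k.2⟩ :
        ((QuotientGroup.mk : G → G ⧸ A) '' (B : Set G))))) : PCst A B := by
  intro V hV
  set r := fun k : B =>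
    (⟨QuotientGroup.mk (k : G), Set.mem_image_of_mem _ k.2⟩ :
      ((QuotientGroup.mk : G → G ⧸ A) '' (B : Set G))) with hr
  have hSopen : IsOpen {k : B | (k : G) ∈ interior V} :=
    isOpen_interior.preimage continuous_subtype_val
  obtain ⟨O₀, hO₀open, hO₀eq⟩ := isOpen_induced_iff.1 (h _ hSopen)
  have h1 : r ⟨1, B.one_mem⟩ ∈ Subtype.val ⁻¹' O₀ := by
    rw [hO₀eq]
    exact Set.mem_image_of_mem r (mem_interior_iff_mem_nhds.2 hV)
  have hO : QuotientGroup.mk ⁻¹' O₀ ∈ 𝓝 (1 : G) :=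
    (hO₀open.preimage QuotientGroup.continuous_mk).mem_nhds h1
  refine ⟨_, hO, ?_⟩
  rintro x ⟨hxO, hxBA⟩
  obtain ⟨b, hbB, a, haA, hba⟩ := Set.mem_mul.1 hxBA
  have hmkx : (QuotientGroup.mk x : G ⧸ A) = QuotientGroup.mk b := by
    rw [QuotientGroup.eq]
    have : x⁻¹ * b = a⁻¹ := by rw [← hba]; simp [mul_assoc]
    rw [this]; exact A.inv_mem haA
  have hbO₀ : (QuotientGroup.mk b : G ⧸ A) ∈ O₀ := by rw [← hmkx]; exact hxO
  have : (⟨QuotientGroup.mk b, Set.mem_image_of_mem _ hbB⟩ :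
      ((QuotientGroup.mk : G → G ⧸ A) '' (B : Set G))) ∈ Subtype.val ⁻¹' O₀ := hbO₀
  rw [hO₀eq] at this
  obtain ⟨k', hk'V, hk'eq⟩ := this
  have hk'b : (QuotientGroup.mk (k' : G) : G ⧸ A) = QuotientGroup.mk b :=
    congrArg Subtype.val hk'eq
  rw [QuotientGroup.eq] at hk'b
  refine Set.mem_mul.2 ⟨(k' : G), ⟨k'.2, interior_subset hk'V⟩, (k' : G)⁻¹ * b * a, ?_, ?_⟩
  · exact A.mul_mem hk'b haA
  · rw [← hba]; simp [mul_assoc]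

lemma pcst_to_open_r {A B : Subgroup G} (h : PCst A B) :
    IsOpenMap (fun k : B =>
      (⟨QuotientGroup.mk (k : G), Set.mem_image_of_mem _ k.2⟩ :
        ((QuotientGroup.mk : G → G ⧸ A) '' (B : Set G)))) := by
  set r := fun k : B =>
    (⟨QuotientGroup.mk (k : G), Set.mem_image_of_mem _ k.2⟩ :
      ((QuotientGroup.mk : G → G ⧸ A) '' (B : Set G))) with hr
  rw [isOpenMap_iff_nhds_le]
  intro k₀ s hs
  rw [Filter.mem_map, nhds_induced] at hs
  obtain ⟨V, hV, hVsub⟩ := Filter.mem_comap.1 hs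
  have hV₁ : (fun x => (k₀ : G) * x) ⁻¹' V ∈ 𝓝 (1 : G) :=
    (continuous_mul_left (k₀ : G)).continuousAt.preimage_mem_nhds (by rwa [mul_one])
  obtain ⟨O₁, hO₁, hO₁sub⟩ := h _ hV₁
  rw [nhds_induced]
  refine Filter.mem_comap.2
    ⟨QuotientGroup.mk '' ((fun x => (k₀ : G) * x) '' O₁), ?_, ?_⟩
  · refine QuotientGroup.isOpenMap_coe.image_mem_nhds ?_
    have h' := (Homeomorph.mulLeft (k₀ : G)).isOpenMap.image_mem_nhds hO₁
    simpa using h'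
  · rintro ⟨y, hyim⟩ hyO
    obtain ⟨b, hbB, rfl⟩ := hyim
    obtain ⟨z, ⟨o, hoO₁, rfl⟩, hzy⟩ := hyO
    have hmk0 : (QuotientGroup.mk ((k₀ : G) * o) : G ⧸ A) = QuotientGroup.mk b := hzy
    have hmk : ((k₀ : G) * o)⁻¹ * b ∈ A := QuotientGroup.eq.1 hmk0
    have hoBA : o ∈ O₁ ∩ ((B : Set G) * (A : Set G)) := by
      refine ⟨hoO₁, ?_⟩
      refine Set.mem_mul.2 ⟨(k₀ : G)⁻¹ * b, B.mul_mem (B.inv_mem k₀.2) hbB,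
        b⁻¹ * ((k₀ : G) * o), ?_, by simp [mul_assoc]⟩
      have hxx : b⁻¹ * ((k₀ : G) * o) = (((k₀ : G) * o)⁻¹ * b)⁻¹ := by
        simp [mul_assoc]
      rw [hxx]; exact A.inv_mem hmk
    obtain ⟨b', ⟨hb'B, hb'V₁⟩, a', ha'A, hba'⟩ := Set.mem_mul.1 (hO₁sub hoBA)
    have hk : (k₀ : G) * b' ∈ B := B.mul_mem k₀.2 hb'B
    have hkV : (k₀ : G) * b' ∈ V := hb'V₁
    have hval : r ⟨(k₀ : G) * b', hk⟩ =
        ⟨QuotientGroup.mk b, Set.mem_image_of_mem _ hbB⟩ := by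
      apply Subtype.ext
      show (QuotientGroup.mk ((k₀ : G) * b') : G ⧸ A) = QuotientGroup.mk b
      rw [QuotientGroup.eq]
      have hx : ((k₀ : G) * b')⁻¹ * b = a' * (((k₀ : G) * o)⁻¹ * b) := by
        rw [← hba']; simp [mul_assoc]
      rw [hx]; exact A.mul_mem ha'A hmk
    have hfin : r ⟨(k₀ : G) * b', hk⟩ ∈ s := hVsub hkV
    rwa [hval] at hfin

end Topo

section QLemmas

variable {G : Type*} [Group G] [TopologicalSpace G] [IsTopologicalGroup G]
variable (A B : Subgroup G)

lemma q_injective (q : G ⧸ (A ⊓ B) → (G ⧸ A) × (G ⧸ B))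
    (hq : ∀ g : G, q (QuotientGroup.mk g) = (QuotientGroup.mk g, QuotientGroup.mk g)) :
    Function.Injective q := by
  intro x y hxy
  obtain ⟨a, rfl⟩ := QuotientGroup.mk_surjective x
  obtain ⟨b, rfl⟩ := QuotientGroup.mk_surjective y
  rw [hq, hq, Prod.mk.injEq] at hxy
  obtain ⟨h1, h2⟩ := hxy
  rw [QuotientGroup.eq] at h1 h2 ⊢
  exact Subgroup.mem_inf.2 ⟨h1, h2⟩

lemma q_continuous (q : G ⧸ (A ⊓ B) → (G ⧸ A) × (G ⧸ B))
    (hq : ∀ g : G, q (QuotientGroup.mk g) = (QuotientGroup.mk g, QuotientGroup.mk g)) :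
    Continuous q := by
  rw [(QuotientGroup.isQuotientMap_mk (A ⊓ B)).continuous_iff]
  have : (q ∘ (QuotientGroup.mk : G → G ⧸ (A ⊓ B))) = fun g : G =>
      ((QuotientGroup.mk g : G ⧸ A), (QuotientGroup.mk g : G ⧸ B)) := funext hq
  rw [this]
  exact QuotientGroup.continuous_mk.prodMk QuotientGroup.continuous_mk

lemma past_to_inducing (q : G ⧸ (A ⊓ B) → (G ⧸ A) × (G ⧸ B))
    (hq : ∀ g : G, q (QuotientGroup.mk g) = (QuotientGroup.mk g, QuotientGroup.mk g))
    (h : PAst A B) : IsInducing q := by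
  have hcont := q_continuous A B q hq
  rw [isInducing_iff_nhds]
  intro x
  refine le_antisymm (Filter.map_le_iff_le_comap.1 (hcont.tendsto x)) ?_
  intro S hS
  obtain ⟨g, rfl⟩ := QuotientGroup.mk_surjective x
  have hS' : (QuotientGroup.mk : G → G ⧸ (A ⊓ B)) ⁻¹' S ∈ 𝓝 g :=
    QuotientGroup.continuous_mk.continuousAt.preimage_mem_nhds hS
  have hW₁ : (fun w => g * w) ⁻¹' ((QuotientGroup.mk : G → G ⧸ (A ⊓ B)) ⁻¹' S) ∈ 𝓝 (1:G) :=
    (continuous_mul_left g).continuousAt.preimage_mem_nhds (by rwa [mul_one])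
  obtain ⟨O, hO, hOsub⟩ := h _ hW₁
  have hOg : (fun x => g⁻¹ * x) ⁻¹' O ∈ 𝓝 g :=
    (continuous_mul_left g⁻¹).continuousAt.preimage_mem_nhds (by rwa [inv_mul_cancel])
  refine Filter.mem_comap.2 ⟨(QuotientGroup.mk '' ((fun x => g⁻¹ * x) ⁻¹' O)) ×ˢ
      (QuotientGroup.mk '' ((fun x => g⁻¹ * x) ⁻¹' O)), ?_, ?_⟩
  · rw [hq]
    exact prod_mem_nhds (QuotientGroup.isOpenMap_coe.image_mem_nhds hOg)
      (QuotientGroup.isOpenMap_coe.image_mem_nhds hOg)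
  · intro y hy
    obtain ⟨b, rfl⟩ := QuotientGroup.mk_surjective y
    rw [Set.mem_preimage, hq] at hy
    obtain ⟨hy1, hy2⟩ := hy
    obtain ⟨o₁, ho₁, heq₁⟩ := hy1
    obtain ⟨o₂, ho₂, heq₂⟩ := hy2
    have hA : g⁻¹ * b ∈ O * (A : Set G) := by
      refine Set.mem_mul.2 ⟨g⁻¹ * o₁, ho₁, o₁⁻¹ * b, QuotientGroup.eq.1 heq₁, by
        simp [mul_assoc]⟩
    have hB : g⁻¹ * b ∈ O * (B : Set G) := by
      refine Set.mem_mul.2 ⟨g⁻¹ * o₂, ho₂, o₂⁻¹ * b, QuotientGroup.eq.1 heq₂, by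
        simp [mul_assoc]⟩
    obtain ⟨w, hw, l, hl, hwl⟩ := Set.mem_mul.1 (hOsub ⟨hA, hB⟩)
    have hb : b = (g * w) * l := by
      have : g * (w * l) = b := by rw [hwl]; simp [mul_assoc]
      rw [← this]; simp [mul_assoc]
    have : (QuotientGroup.mk b : G ⧸ (A ⊓ B)) = QuotientGroup.mk (g * w) := by
      rw [hb]; exact QuotientGroup.mk_mul_of_mem (g * w) hl
    rw [this]
    exact hw

lemma inducing_to_open_r (q : G ⧸ (A ⊓ B) → (G ⧸ A) × (G ⧸ B))
    (hq : ∀ g : G, q (QuotientGroup.mk g) = (QuotientGroup.mk g, QuotientGroup.mk g))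
    (hind : IsInducing q) :
    IsOpenMap (fun k : B =>
      (⟨QuotientGroup.mk (k : G), Set.mem_image_of_mem _ k.2⟩ :
        ((QuotientGroup.mk : G → G ⧸ A) '' (B : Set G)))) := by
  set r := fun k : B =>
    (⟨QuotientGroup.mk (k : G), Set.mem_image_of_mem _ k.2⟩ :
      ((QuotientGroup.mk : G → G ⧸ A) '' (B : Set G))) with hr
  rw [isOpenMap_iff_nhds_le]
  intro k₀ s hs
  rw [Filter.mem_map, nhds_induced] at hs
  obtain ⟨V, hV, hVsub⟩ := Filter.mem_comap.1 hs
  have hVL : (QuotientGroup.mk '' V : Set (G ⧸ (A ⊓ B))) ∈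
      𝓝 (QuotientGroup.mk (k₀ : G)) :=
    QuotientGroup.isOpenMap_coe.image_mem_nhds hV
  rw [hind.nhds_eq_comap] at hVL
  obtain ⟨N, hN, hNsub⟩ := Filter.mem_comap.1 hVL
  rw [hq] at hN
  obtain ⟨N₁, hN₁, N₂, hN₂, hprod⟩ := mem_nhds_prod_iff.1 hN
  rw [nhds_induced]
  refine Filter.mem_comap.2 ⟨N₁, hN₁, ?_⟩
  rintro ⟨y, hyim⟩ hyN₁
  obtain ⟨k, hkB, rfl⟩ := hyim
  have h1 : (QuotientGroup.mk k : G ⧸ A) ∈ N₁ := hyN₁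
  have h2 : (QuotientGroup.mk k : G ⧸ B) ∈ N₂ := by
    have heq : (QuotientGroup.mk k : G ⧸ B) = QuotientGroup.mk (k₀ : G) := by
      rw [QuotientGroup.eq]
      exact B.mul_mem (B.inv_mem hkB) k₀.2
    rw [heq]
    exact mem_of_mem_nhds hN₂
  have hmem : (QuotientGroup.mk k : G ⧸ (A ⊓ B)) ∈ QuotientGroup.mk '' V := by
    apply hNsub
    rw [Set.mem_preimage, hq]
    exact hprod ⟨h1, h2⟩
  obtain ⟨v, hvV, hveq⟩ := hmem
  have hvk : v⁻¹ * k ∈ A ⊓ B := QuotientGroup.eq.1 hveq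
  have hvB : v ∈ B := by
    have : v = k * (v⁻¹ * k)⁻¹ := by simp [mul_assoc]
    rw [this]
    exact B.mul_mem hkB (B.inv_mem (Subgroup.mem_inf.1 hvk).2)
  have hval : r ⟨v, hvB⟩ = ⟨QuotientGroup.mk k, Set.mem_image_of_mem _ hkB⟩ := by
    apply Subtype.ext
    show (QuotientGroup.mk v : G ⧸ A) = QuotientGroup.mk k
    rw [QuotientGroup.eq]
    exact (Subgroup.mem_inf.1 hvk).1
  have hfin : r ⟨v, hvB⟩ ∈ s := hVsub hvV
  rwa [hval] at hfin

lemma closed_mul_iff_closed_image :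
    IsClosed ((A : Set G) * (B : Set G)) ↔
      IsClosed ((QuotientGroup.mk : G → G ⧸ A) '' (B : Set G)) := by
  rw [← (QuotientGroup.isQuotientMap_mk A).isClosed_preimage,
    QuotientGroup.preimage_image_mk_eq_mul]
  constructor
  · intro h
    have := h.inv
    rwa [mul_inv_rev, inv_coe_set, inv_coe_set] at this
  · intro h
    have := h.inv
    rwa [mul_inv_rev, inv_coe_set, inv_coe_set] at this

lemma closed_mul_comm :
    IsClosed ((A : Set G) * (B : Set G)) ↔ IsClosed ((B : Set G) * (A : Set G)) := by
  constructor
  · intro h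
    have := h.inv
    rwa [mul_inv_rev, inv_coe_set, inv_coe_set] at this
  · intro h
    have := h.inv
    rwa [mul_inv_rev, inv_coe_set, inv_coe_set] at this

lemma closed_range_q_iff (q : G ⧸ (A ⊓ B) → (G ⧸ A) × (G ⧸ B))
    (hq : ∀ g : G, q (QuotientGroup.mk g) = (QuotientGroup.mk g, QuotientGroup.mk g)) :
    IsClosed (Set.range q) ↔ IsClosed ((A : Set G) * (B : Set G)) := by
  have hπ : IsQuotientMap (Prod.map (QuotientGroup.mk : G → G ⧸ A)
      (QuotientGroup.mk : G → G ⧸ B)) :=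
    (QuotientGroup.isOpenQuotientMap_mk.prodMap QuotientGroup.isOpenQuotientMap_mk).isQuotientMap
  rw [← hπ.isClosed_preimage]
  have hset : Prod.map (QuotientGroup.mk : G → G ⧸ A) (QuotientGroup.mk : G → G ⧸ B) ⁻¹'
      (Set.range q) = {p : G × G | p.1⁻¹ * p.2 ∈ (A : Set G) * (B : Set G)} := by
    ext ⟨a, b⟩
    simp only [Set.mem_preimage, Prod.map_apply, Set.mem_range, Set.mem_setOf_eq]
    constructor
    · rintro ⟨y, hy⟩
      obtain ⟨g, rfl⟩ := QuotientGroup.mk_surjective y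
      rw [hq, Prod.mk.injEq] at hy
      obtain ⟨h1, h2⟩ := hy
      rw [QuotientGroup.eq] at h1 h2
      refine Set.mem_mul.2 ⟨a⁻¹ * g, ?_, g⁻¹ * b, h2, by simp [mul_assoc]⟩
      have h3 : a⁻¹ * g = (g⁻¹ * a)⁻¹ := by simp
      rw [h3]; exact A.inv_mem h1
    · rintro hab
      obtain ⟨h, hh, k, hk, hhk⟩ := Set.mem_mul.1 hab
      refine ⟨QuotientGroup.mk (a * h), ?_⟩
      rw [hq, Prod.mk.injEq]
      constructor
      · rw [QuotientGroup.eq]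
        have : (a * h)⁻¹ * a = h⁻¹ := by simp [mul_assoc]
        rw [this]; exact A.inv_mem hh
      · rw [QuotientGroup.eq]
        have h3 : (a * h)⁻¹ * b = h⁻¹ * (a⁻¹ * b) := by simp [mul_assoc]
        rw [h3, ← hhk, inv_mul_cancel_left]
        exact hk
  rw [hset]
  constructor
  · intro h
    have h2 := h.preimage (show Continuous (fun b : G => ((1:G), b)) from
      continuous_const.prodMk continuous_id)
    have : (fun b : G => ((1:G), b)) ⁻¹'
        {p : G × G | p.1⁻¹ * p.2 ∈ (A : Set G) * (B : Set G)} =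
        (A : Set G) * (B : Set G) := by
      ext x; simp
    rwa [this] at h2
  · intro h
    exact h.preimage ((continuous_fst.inv).mul continuous_snd)

end QLemmas

theorem stmt_16
    {G : Type*} [Group G] [TopologicalSpace G] [IsTopologicalGroup G]
    [LocallyCompactSpace G] [T2Space G]
    (H K : Subgroup G) (hH : IsClosed (H : Set G)) (hK : IsClosed (K : Set G))
    (q : G ⧸ (H ⊓ K) → (G ⧸ H) × (G ⧸ K))
    (hq : ∀ g : G, q (QuotientGroup.mk g) = (QuotientGroup.mk g, QuotientGroup.mk g)) :
    List.TFAE [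
      IsClosedMap q,
      (IsClosed ((H : Set G) * (K : Set G)) ∧
        IsOpenMap (fun p : H × K =>
          (⟨(p.1 : G) * (p.2 : G), Set.mul_mem_mul p.1.2 p.2.2⟩ :
            ((H : Set G) * (K : Set G) : Set G)))),
      (IsClosed ((QuotientGroup.mk : G → G ⧸ H) '' (K : Set G)) ∧
        IsOpenMap (fun k : K =>
          (⟨QuotientGroup.mk (k : G), Set.mem_image_of_mem _ k.2⟩ :
            ((QuotientGroup.mk : G → G ⧸ H) '' (K : Set G))))),
      (IsClosed ((QuotientGroup.mk : G → G ⧸ K) '' (H : Set G)) ∧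
        IsOpenMap (fun h : H =>
          (⟨QuotientGroup.mk (h : G), Set.mem_image_of_mem _ h.2⟩ :
            ((QuotientGroup.mk : G → G ⧸ K) '' (H : Set G)))))
    ] := by
  have hcont := q_continuous H K q hq
  have hinj := q_injective H K q hq
  tfae_have 1 → 3 := by
    intro h1
    have hce : IsClosedEmbedding q :=
      IsClosedEmbedding.of_continuous_injective_isClosedMap hcont hinj h1
    exact ⟨(closed_mul_iff_closed_image H K).1
        ((closed_range_q_iff H K q hq).1 hce.isClosed_range),
      inducing_to_open_r H K q hq hce.isInducing⟩
  tfae_have 3 → 2 := by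
    rintro ⟨hc, ho⟩
    exact ⟨(closed_mul_iff_closed_image H K).2 hc,
      pbst_to_open_mu (pcst_to_pbst (open_r_to_pcst ho))⟩
  tfae_have 2 → 1 := by
    rintro ⟨hc, ho⟩
    have hind := past_to_inducing H K q hq (pbst_to_past (open_mu_to_pbst ho))
    have hce : IsClosedEmbedding q :=
      ⟨⟨hind, hinj⟩, (closed_range_q_iff H K q hq).2 hc⟩
    exact hce.isClosedMap
  tfae_have 2 → 4 := by
    rintro ⟨hc, ho⟩
    exact ⟨(closed_mul_iff_closed_image K H).1 ((closed_mul_comm H K).1 hc),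
      pcst_to_open_r (pbst_to_pcst (pbst_symm (open_mu_to_pbst ho)))⟩
  tfae_have 4 → 2 := by
    rintro ⟨hc, ho⟩
    exact ⟨(closed_mul_comm K H).1 ((closed_mul_iff_closed_image K H).2 hc),
      pbst_to_open_mu (pbst_symm (pcst_to_pbst (open_r_to_pcst ho)))⟩
  tfae_finish
end

section
/- Let G be a locally compact Hausdorff topological group and K ⊆ H closed subgroups of G; let p_{K,H} : G/K → G/H be the natural projection gK ↦ gH. (a) If the coset space H/K (the quotient of H by its closed subgroup K, equivalently the image of H in G/K) is compact, then p_{K,H} is a proper map: the preimage of every compact subset of G/H is a compact subset of G/K. (b) If H/K is not compact, then for every a ∈ G/H the fiber p_{K,H}⁻¹({a}) is not relatively compact in G/K (its closure is not compact). -/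
open Set Topology

theorem stmt_17
    {G : Type*} [Group G] [TopologicalSpace G] [IsTopologicalGroup G]
    [LocallyCompactSpace G] [T2Space G]
    (H K : Subgroup G) (hH : IsClosed (H : Set G)) (hK : IsClosed (K : Set G))
    (hKH : K ≤ H)
    (p : G ⧸ K → G ⧸ H)
    (hp : ∀ g : G, p (QuotientGroup.mk g) = QuotientGroup.mk g) :
    (IsCompact ((QuotientGroup.mk : G → G ⧸ K) '' (H : Set G)) →
      ∀ C : Set (G ⧸ H), IsCompact C → IsCompact (p ⁻¹' C)) ∧
    (¬ IsCompact ((QuotientGroup.mk : G → G ⧸ K) '' (H : Set G)) →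
      ∀ a : G ⧸ H, ¬ IsCompact (closure (p ⁻¹' {a}))) := by
  set πK : G → G ⧸ K := QuotientGroup.mk with hπK
  set πH : G → G ⧸ H := QuotientGroup.mk with hπH
  set Q : Set (G ⧸ K) := πK '' (H : Set G) with hQdef
  -- continuity of p
  have hpc : Continuous p := by
    rw [(QuotientGroup.isQuotientMap_mk K).continuous_iff]
    have : p ∘ πK = πH := funext hp
    rw [this]
    exact QuotientGroup.continuous_mk
  -- Q is closed
  have hQsat : πK ⁻¹' Q = (H : Set G) := by
    ext g
    constructor
    · rintro ⟨h, hh, hgh⟩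
      have : h⁻¹ * g ∈ K := QuotientGroup.eq.mp hgh
      have := mul_mem hh (hKH this)
      simpa using this
    · intro hg; exact ⟨g, hg, rfl⟩
  have hQclosed : IsClosed Q := by
    rw [← (QuotientGroup.isQuotientMap_mk K).isClosed_preimage, hQsat]
    exact hH
  -- G ⧸ H is T2
  have hT2 : T2Space (G ⧸ H) := by
    rw [t2_iff_isClosed_diagonal]
    rw [← (QuotientGroup.isOpenQuotientMap_mk.prodMap
      (QuotientGroup.isOpenQuotientMap_mk (N := H))).isQuotientMap.isClosed_preimage]
    have : Prod.map πH πH ⁻¹' (diagonal (G ⧸ H)) =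
        (fun q : G × G => q.1⁻¹ * q.2) ⁻¹' (H : Set G) := by
      ext ⟨a, b⟩
      simp only [mem_preimage, Prod.map, mem_diagonal_iff, SetLike.mem_coe]
      exact QuotientGroup.eq
    rw [this]
    exact hH.preimage ((continuous_fst.inv).mul continuous_snd)
  constructor
  · -- proper case
    intro hQ C hC
    -- find compact D ⊆ G with C ⊆ πH '' D
    obtain ⟨D, hDcomp, hCD⟩ : ∃ D : Set G, IsCompact D ∧ C ⊆ πH '' D := by
      choose V hVc hVmem using fun g : G => exists_compact_mem_nhds g
      have hU : ∀ x ∈ C, (πH '' V x.out) ∈ 𝓝 x := by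
        intro x _
        have hx : πH x.out = x := QuotientGroup.out_eq' x
        have h := (QuotientGroup.isOpenMap_coe (N := H)).image_mem_nhds (hVmem x.out)
        simpa only [QuotientGroup.out_eq'] using h
      obtain ⟨t, _, hcov⟩ := hC.elim_nhds_subcover (fun x => πH '' V (Quotient.out x)) hU
      refine ⟨⋃ x ∈ t, V (Quotient.out x), ?_, ?_⟩
      · exact t.isCompact_biUnion (fun x _ => hVc _)
      · intro c hc
        obtain ⟨x, hx, hcx⟩ := Set.mem_iUnion₂.mp (hcov hc)
        obtain ⟨g, hg, hgx⟩ := hcx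
        exact ⟨g, Set.mem_iUnion₂.mpr ⟨x, hx, hg⟩, hgx⟩
    -- p ⁻¹' C ⊆ image of D ×ˢ Q under smul
    have hsub : p ⁻¹' C ⊆ (fun q : G × (G ⧸ K) => q.1 • q.2) '' (D ×ˢ Q) := by
      intro y hy
      obtain ⟨g, rfl⟩ := QuotientGroup.mk_surjective y
      have : πH g ∈ C := by rw [← hp g]; exact hy
      obtain ⟨d, hd, hdg⟩ := hCD this
      have hdH : d⁻¹ * g ∈ H := QuotientGroup.eq.mp hdg
      refine ⟨(d, πK (d⁻¹ * g)), ⟨hd, ⟨d⁻¹ * g, hdH, rfl⟩⟩, ?_⟩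
      show d • (πK (d⁻¹ * g)) = πK g
      rw [MulAction.Quotient.smul_mk]
      congr 1
      rw [smul_eq_mul]
      group
    have himg : IsCompact ((fun q : G × (G ⧸ K) => q.1 • q.2) '' (D ×ˢ Q)) :=
      (hDcomp.prod hQ).image continuous_smul
    have hclosed : IsClosed (p ⁻¹' C) := (hC.isClosed).preimage hpc
    exact himg.of_isClosed_subset hclosed hsub
  · -- non-compact case
    intro hQ a hcomp
    apply hQ
    obtain ⟨g₀, rfl⟩ := QuotientGroup.mk_surjective a
    -- Q ⊆ g₀⁻¹ • closure (p ⁻¹' {πH g₀})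
    have hfib : Q ⊆ (g₀⁻¹ • ·) '' closure (p ⁻¹' {πH g₀}) := by
      rintro y ⟨h, hh, rfl⟩
      refine ⟨πK (g₀ * h), subset_closure ?_, ?_⟩
      · rw [mem_preimage, hp, mem_singleton_iff]
        apply QuotientGroup.eq.mpr
        have h1 : (g₀ * h)⁻¹ * g₀ = h⁻¹ := by group
        rw [h1]
        exact inv_mem hh
      · show g₀⁻¹ • πK (g₀ * h) = πK h
        rw [MulAction.Quotient.smul_mk]
        congr 1
        rw [smul_eq_mul]
        group
    have : IsCompact ((g₀⁻¹ • ·) '' closure (p ⁻¹' {πH g₀})) :=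
      hcomp.image (continuous_const_smul _)
    exact this.of_isClosed_subset hQclosed hfib
end

section
/- Let G be a locally compact Hausdorff topological group and K ⊆ H closed subgroups of G; let p_{K,H} : G/K → G/H be the natural projection gK ↦ gH. (a) If the coset space H/K is compact, then for every continuous function f : G/H → ℂ vanishing at infinity, the composition f ∘ p_{K,H} : G/K → ℂ vanishes at infinity. (b) If H/K is not compact, then the only continuous function f : G/H → ℂ vanishing at infinity such that f ∘ p_{K,H} vanishes at infinity is f = 0. -/
open Set
open scoped Pointwise

/-- Compact sets in a quotient of a locally compact group lift to compact sets. -/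
lemma lift_compact_aux {G : Type*} [Group G] [TopologicalSpace G] [IsTopologicalGroup G]
    [LocallyCompactSpace G] (N : Subgroup G) {S : Set (G ⧸ N)} (hS : IsCompact S) :
    ∃ Q : Set G, IsCompact Q ∧ S ⊆ (QuotientGroup.mk : G → G ⧸ N) '' Q := by
  choose V hVc hVn using fun x : G ⧸ N => exists_compact_mem_nhds (Quotient.out x)
  obtain ⟨t, -, ht⟩ := hS.elim_nhds_subcover
    (fun x => (QuotientGroup.mk : G → G ⧸ N) '' interior (V x)) (fun x _ => by
      have hopen : IsOpen ((QuotientGroup.mk : G → G ⧸ N) '' interior (V x)) :=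
        QuotientGroup.isOpenMap_coe _ isOpen_interior
      have hx : x ∈ (QuotientGroup.mk : G → G ⧸ N) '' interior (V x) :=
        ⟨Quotient.out x, mem_interior_iff_mem_nhds.mpr (hVn x), QuotientGroup.out_eq' x⟩
      exact hopen.mem_nhds hx)
  refine ⟨⋃ x ∈ t, V x, t.isCompact_biUnion (fun x _ => hVc x), ?_⟩
  intro y hy
  rcases Set.mem_iUnion₂.mp (ht hy) with ⟨x, hxt, a, ha, rfl⟩
  exact ⟨a, Set.mem_iUnion₂.mpr ⟨x, hxt, interior_subset ha⟩, rfl⟩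

theorem stmt_18
    {G : Type*} [Group G] [TopologicalSpace G] [IsTopologicalGroup G]
    [LocallyCompactSpace G] [T2Space G]
    (H K : Subgroup G) (hH : IsClosed (H : Set G)) (hK : IsClosed (K : Set G))
    (hKH : K ≤ H)
    (p : G ⧸ K → G ⧸ H)
    (hp : ∀ g : G, p (QuotientGroup.mk g) = QuotientGroup.mk g) :
    (IsCompact ((QuotientGroup.mk : G → G ⧸ K) '' (H : Set G)) →
      ∀ f : G ⧸ H → ℂ, Continuous f →
        (∀ ε : ℝ, 0 < ε → IsCompact {x : G ⧸ H | ε ≤ ‖f x‖}) →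
        (∀ ε : ℝ, 0 < ε → IsCompact {y : G ⧸ K | ε ≤ ‖f (p y)‖})) ∧
    (¬ IsCompact ((QuotientGroup.mk : G → G ⧸ K) '' (H : Set G)) →
      ∀ f : G ⧸ H → ℂ, Continuous f →
        (∀ ε : ℝ, 0 < ε → IsCompact {x : G ⧸ H | ε ≤ ‖f x‖}) →
        (∀ ε : ℝ, 0 < ε → IsCompact {y : G ⧸ K | ε ≤ ‖f (p y)‖}) → f = 0) := by
  have hpc : Continuous p := by
    rw [(QuotientGroup.isQuotientMap_mk K).continuous_iff]
    have heq : p ∘ (QuotientGroup.mk : G → G ⧸ K) = (QuotientGroup.mk : G → G ⧸ H) := funext hp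
    rw [heq]
    exact QuotientGroup.continuous_mk
  constructor
  · -- Part (a)
    intro hC f hf hf0 ε hε
    obtain ⟨Q, hQ, hSQ⟩ := lift_compact_aux H (hf0 ε hε)
    have hclosed : IsClosed {y : G ⧸ K | ε ≤ ‖f (p y)‖} :=
      isClosed_le continuous_const ((hf.comp hpc).norm)
    refine IsCompact.of_isClosed_subset ((hQ.prod hC).image continuous_smul) hclosed ?_
    intro y hy
    obtain ⟨a, rfl⟩ := QuotientGroup.mk_surjective y
    have hmemS : (QuotientGroup.mk a : G ⧸ H) ∈ {x : G ⧸ H | ε ≤ ‖f x‖} := by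
      simpa [hp a] using hy
    obtain ⟨q, hq, hqa⟩ := hSQ hmemS
    have hmem : q⁻¹ * a ∈ H := QuotientGroup.eq.mp hqa
    refine ⟨(q, QuotientGroup.mk (q⁻¹ * a)), ⟨hq, ⟨q⁻¹ * a, hmem, rfl⟩⟩, ?_⟩
    show q • (QuotientGroup.mk (q⁻¹ * a) : G ⧸ K) = QuotientGroup.mk a
    rw [MulAction.Quotient.smul_mk]
    simp [smul_eq_mul, mul_inv_cancel_left]
  · -- Part (b)
    intro hC f hf hf0 hcomp
    by_contra hne
    obtain ⟨x, hx⟩ : ∃ x, f x ≠ 0 := by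
      by_contra h
      push_neg at h
      exact hne (funext h)
    have hε : 0 < ‖f x‖ := norm_pos_iff.mpr hx
    obtain ⟨g, rfl⟩ := QuotientGroup.mk_surjective x
    set ε := ‖f (QuotientGroup.mk g)‖ with hεdef
    have hsub : g • ((QuotientGroup.mk : G → G ⧸ K) '' (H : Set G)) ⊆
        {y : G ⧸ K | ε ≤ ‖f (p y)‖} := by
      rintro _ ⟨_, ⟨h, hh, rfl⟩, rfl⟩
      show ε ≤ ‖f (p (g • (QuotientGroup.mk h : G ⧸ K)))‖
      rw [MulAction.Quotient.smul_mk, hp]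
      have heq2 : (QuotientGroup.mk (g • h) : G ⧸ H) = QuotientGroup.mk g :=
        QuotientGroup.eq.mpr (by simpa using H.inv_mem hh)
      rw [heq2]
    have hCclosed : IsClosed ((QuotientGroup.mk : G → G ⧸ K) '' (H : Set G)) := by
      rw [← (QuotientGroup.isQuotientMap_mk K).isClosed_preimage]
      have hpre : (QuotientGroup.mk : G → G ⧸ K) ⁻¹'
          ((QuotientGroup.mk : G → G ⧸ K) '' (H : Set G)) = (H : Set G) := by
        ext a
        constructor
        · rintro ⟨h, hh, hha⟩
          have hk : h⁻¹ * a ∈ K := QuotientGroup.eq.mp hha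
          simpa using H.mul_mem hh (hKH hk)
        · intro ha
          exact ⟨a, ha, rfl⟩
      rw [hpre]
      exact hH
    have hcpt : IsCompact (g • ((QuotientGroup.mk : G → G ⧸ K) '' (H : Set G))) :=
      (hcomp ε hε).of_isClosed_subset (hCclosed.smul g) hsub
    have hfinal := hcpt.smul g⁻¹
    rw [inv_smul_smul] at hfinal
    exact hC hfinal
end

section
/- Let G be a locally compact Hausdorff topological group and 𝓛 a set of closed subgroups of G that is closed under pairwise intersection and such that for all H, K ∈ 𝓛, the set HK is closed in G and the multiplication map H × K → HK is open onto HK with its subspace topology. For H ∈ 𝓛, let V_H = {f ∘ p_H : f ∈ C₀(G/H)} ⊆ C_b(G), where p_H : G → G/H is the quotient map. Then the family of subspaces (V_H)_{H∈𝓛} of C_b(G) is linearly independent — i.e. every finitely supported family (g_H)_{H∈𝓛} with g_H ∈ V_H and Σ_H g_H = 0 satisfies g_H = 0 for all H — if and only if for all H, K ∈ 𝓛 with K ⊆ H and K ≠ H, the coset space H/K is not compact. -/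
open scoped Pointwise

section Aux
variable {G : Type*} [Group G] [TopologicalSpace G] [IsTopologicalGroup G]
variable [DecidableEq (Subgroup G)]

/-- Topological B. H. Neumann covering lemma. -/
lemma aux_neumann : ∀ (n : ℕ) (t : Finset (Subgroup G)) (L : Subgroup G → Subgroup G)
    (C : Subgroup G → Set G) (A : Set G),
    (t.image L).card ≤ n →
    (∀ i ∈ t, IsCompact (C i)) →
    A ⊆ ⋃ i ∈ t, C i * (L i : Set G) →
    (∀ i ∈ t, ∀ x ∈ A, ({x} : Set G) * (L i : Set G) ⊆ A) →
    A.Nonempty →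
    ∃ i ∈ t, ∃ D : Set G, IsCompact D ∧ A ⊆ D * (L i : Set G) := by
  intro n
  induction n with
  | zero =>
    intro t L C A hcard hC hcover hsat hne
    obtain ⟨a, ha⟩ := hne
    have ht : t = ∅ := by
      by_contra h
      obtain ⟨i, hi⟩ := Finset.nonempty_iff_ne_empty.2 h
      have h1 : L i ∈ t.image L := Finset.mem_image_of_mem L hi
      have := Finset.card_pos.2 ⟨L i, h1⟩
      omega
    subst ht
    simp only [Finset.notMem_empty, Set.iUnion_of_empty, Set.iUnion_empty] at hcover
    exact absurd (hcover ha) (Set.notMem_empty a)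
  | succ n IH =>
    intro t L C A hcard hC hcover hsat hne
    rcases t.eq_empty_or_nonempty with ht | ⟨i₀, hi₀⟩
    · subst ht
      simp only [Finset.notMem_empty, Set.iUnion_of_empty, Set.iUnion_empty] at hcover
      obtain ⟨a, ha⟩ := hne
      exact absurd (hcover ha) (Set.notMem_empty a)
    by_cases hD : A ⊆ ⋃ i ∈ t.filter (fun i => L i = L i₀), C i * (L i : Set G)
    · refine ⟨i₀, hi₀, ⋃ i ∈ t.filter (fun i => L i = L i₀), C i, ?_, ?_⟩
      · exact (t.filter _).finite_toSet.isCompact_biUnion fun i hi => hC i (Finset.mem_filter.1 hi).1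
      · intro a ha
        obtain ⟨i, hi, c, hc, l, hl, rfl⟩ := by
          simpa only [Set.mem_iUnion, exists_prop, Set.mem_mul] using hD ha
        have hLi : L i = L i₀ := (Finset.mem_filter.1 hi).2
        exact Set.mul_mem_mul (Set.mem_biUnion hi hc) (hLi ▸ hl)
    · obtain ⟨x, hxA, hx⟩ := Set.not_subset.1 hD
      set t₁ := t.filter (fun i => ¬ L i = L i₀) with ht₁
      -- x • L i₀ is covered by the part of the cover away from L i₀
      have claim1 : ({x} : Set G) * (L i₀ : Set G) ⊆ ⋃ i ∈ t₁, C i * (L i : Set G) := by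
        intro z hz
        obtain ⟨l, hl, rfl⟩ := by
          simpa only [Set.mem_mul, Set.mem_singleton_iff, exists_eq_left] using hz
        have hzA : x * l ∈ A := hsat i₀ hi₀ x hxA (Set.mul_mem_mul rfl hl)
        obtain ⟨i, hi, c, hc, l', hl', hzeq⟩ := by
          simpa only [Set.mem_iUnion, exists_prop, Set.mem_mul] using hcover hzA
        by_cases hLi : L i = L i₀
        · exfalso
          apply hx
          refine Set.mem_biUnion (Finset.mem_filter.2 ⟨hi, hLi⟩) ?_
          have hxeq : x = c * (l' * l⁻¹) := by
            rw [← mul_assoc, hzeq, mul_inv_cancel_right]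
          rw [hxeq]
          exact Set.mul_mem_mul hc (mul_mem hl' (by rw [hLi]; exact inv_mem hl))
        · exact Set.mem_biUnion (Finset.mem_filter.2 ⟨hi, hLi⟩)
            (hzeq ▸ Set.mul_mem_mul hc hl')
      set C' : Subgroup G → Set G := fun i =>
        C i ∪ ⋃ j ∈ t.filter (fun j => L j = L i₀), C j * ({x⁻¹} : Set G) * C i with hC'
      have cover2 : A ⊆ ⋃ i ∈ t₁, C' i * (L i : Set G) := by
        intro a ha
        obtain ⟨i, hi, c, hc, l, hl, rfl⟩ := by
          simpa only [Set.mem_iUnion, exists_prop, Set.mem_mul] using hcover ha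
        by_cases hLi : L i = L i₀
        · have hxl : x * l ∈ ({x} : Set G) * (L i₀ : Set G) :=
            Set.mul_mem_mul rfl (hLi ▸ hl)
          obtain ⟨j, hj, c', hc', l', hl', hzeq⟩ := by
            simpa only [Set.mem_iUnion, exists_prop, Set.mem_mul] using claim1 hxl
          refine Set.mem_biUnion hj ?_
          have haeq : c * l = (c * x⁻¹ * c') * l' := by
            rw [mul_assoc (c * x⁻¹), hzeq]; group
          rw [haeq]
          refine Set.mul_mem_mul (Set.mem_union_right _ ?_) hl'
          exact Set.mem_biUnion (Finset.mem_filter.2 ⟨hi, hLi⟩)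
            (Set.mul_mem_mul (Set.mul_mem_mul hc rfl) hc')
        · refine Set.mem_biUnion (Finset.mem_filter.2 ⟨hi, hLi⟩) ?_
          exact Set.mul_mem_mul (Set.mem_union_left _ hc) hl
      have hC2 : ∀ i ∈ t₁, IsCompact (C' i) := by
        intro i hi
        refine (hC i (Finset.mem_filter.1 hi).1).union ?_
        refine (t.filter _).finite_toSet.isCompact_biUnion fun j hj => ?_
        exact (((hC j (Finset.mem_filter.1 hj).1).mul isCompact_singleton).mul
          (hC i (Finset.mem_filter.1 hi).1))
      have hcard2 : (t₁.image L).card ≤ n := by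
        have hsub : t₁.image L ⊆ (t.image L).erase (L i₀) := by
          intro a ha
          obtain ⟨j, hj, rfl⟩ := Finset.mem_image.1 ha
          exact Finset.mem_erase.2 ⟨(Finset.mem_filter.1 hj).2,
            Finset.mem_image_of_mem L (Finset.mem_filter.1 hj).1⟩
        have h1 := Finset.card_le_card hsub
        have h2 : ((t.image L).erase (L i₀)).card = (t.image L).card - 1 :=
          Finset.card_erase_of_mem (Finset.mem_image_of_mem L hi₀)
        have h3 : 0 < (t.image L).card :=
          Finset.card_pos.2 ⟨L i₀, Finset.mem_image_of_mem L hi₀⟩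
        omega
      have hsat2 : ∀ i ∈ t₁, ∀ x ∈ A, ({x} : Set G) * (L i : Set G) ⊆ A :=
        fun i hi => hsat i (Finset.mem_filter.1 hi).1
      obtain ⟨i, hi, D, hDc, hsub⟩ := IH t₁ L C' A hcard2 hC2 cover2 hsat2 hne
      exact ⟨i, (Finset.mem_filter.1 hi).1, D, hDc, hsub⟩
end Aux

section Aux2
variable {G : Type*} [Group G] [TopologicalSpace G] [IsTopologicalGroup G]

/-- Lifting a compact subset of the quotient through the quotient map. -/
lemma aux_lift_compact [LocallyCompactSpace G] (K : Subgroup G) {T : Set (G ⧸ K)}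
    (hT : IsCompact T) :
    ∃ C : Set G, IsCompact C ∧ ((QuotientGroup.mk : G → G ⧸ K) ⁻¹' T) ⊆ C * (K : Set G) := by
  choose N hNc hNn using fun g : G => exists_compact_mem_nhds g
  have hcover : T ⊆ ⋃ y : G ⧸ K, (QuotientGroup.mk '' interior (N y.out)) := by
    intro y hy
    refine Set.mem_iUnion.2 ⟨y, ?_⟩
    exact ⟨y.out, mem_interior_iff_mem_nhds.2 (hNn y.out), QuotientGroup.out_eq' y⟩
  obtain ⟨F, hF⟩ := hT.elim_finite_subcover
    (fun y : G ⧸ K => (QuotientGroup.mk : G → G ⧸ K) '' interior (N y.out))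
    (fun y => QuotientGroup.isOpenMap_coe _ isOpen_interior) hcover
  refine ⟨⋃ y ∈ F, N y.out, F.finite_toSet.isCompact_biUnion fun y _ => hNc y.out, ?_⟩
  intro z hz
  obtain ⟨y, hyF, c, hc, hez⟩ := by
    simpa only [Set.mem_iUnion, exists_prop, Set.mem_image] using hF hz
  have hck : c⁻¹ * z ∈ K := QuotientGroup.eq.1 hez
  have hzc : z = c * (c⁻¹ * z) := by group
  rw [hzc]
  exact Set.mul_mem_mul (Set.mem_biUnion hyF (interior_subset hc)) hck

/-- From compactness of `B` and the open multiplication hypothesis, the part of `H`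
lying in `B * K` is compact modulo `H ⊓ K`. -/
lemma aux_inter_bound [LocallyCompactSpace G]
    (H K : Subgroup G) (hH : IsClosed (H : Set G))
    (hHK : IsClosed ((H : Set G) * (K : Set G)))
    (hopen : IsOpenMap (fun p : H × K =>
      (⟨(p.1 : G) * (p.2 : G), Set.mul_mem_mul p.1.2 p.2.2⟩ :
        ((H : Set G) * (K : Set G) : Set G))))
    {B : Set G} (hB : IsCompact B) :
    ∃ C : Set G, IsCompact C ∧
      (H : Set G) ∩ (B * (K : Set G)) ⊆ C * ((H ⊓ K : Subgroup G) : Set G) := by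
  set B' := B ∩ ((H : Set G) * (K : Set G)) with hB'def
  have hB'c : IsCompact B' := hB.inter_right hHK
  have key : ∀ b ∈ B', ∃ N W : Set G, IsCompact N ∧ IsOpen W ∧ b ∈ W ∧
      ∀ z, z ∈ W → z ∈ (H : Set G) * (K : Set G) →
        ∃ u, u ∈ N ∧ u ∈ (H : Set G) ∧ ∃ v ∈ (K : Set G), z = u * v := by
    rintro b ⟨hbB, hbHK⟩
    obtain ⟨h₀, hh₀, k₀, hk₀, rfl⟩ := hbHK
    obtain ⟨N, hNc, hNn⟩ := exists_compact_mem_nhds h₀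
    set U : Set (H × K) := (Subtype.val ⁻¹' interior N) ×ˢ (Set.univ : Set K) with hU
    have hUopen : IsOpen U := ((isOpen_interior).preimage continuous_subtype_val).prod isOpen_univ
    have himg : IsOpen ((fun p : H × K =>
        (⟨(p.1 : G) * (p.2 : G), Set.mul_mem_mul p.1.2 p.2.2⟩ :
          ((H : Set G) * (K : Set G) : Set G))) '' U) := hopen U hUopen
    obtain ⟨W, hWopen, hWeq⟩ := isOpen_induced_iff.1 himg
    refine ⟨N, W, hNc, hWopen, ?_, ?_⟩
    · have hmem : (⟨h₀ * k₀, Set.mul_mem_mul hh₀ hk₀⟩ :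
          ((H : Set G) * (K : Set G) : Set G)) ∈ Subtype.val ⁻¹' W := by
        rw [hWeq]
        exact ⟨(⟨⟨h₀, hh₀⟩, ⟨k₀, hk₀⟩⟩ : H × K),
          ⟨mem_interior_iff_mem_nhds.2 hNn, Set.mem_univ _⟩, rfl⟩
      exact hmem
    · intro z hzW hzHK
      have hmem : (⟨z, hzHK⟩ : ((H : Set G) * (K : Set G) : Set G)) ∈
          Subtype.val ⁻¹' W := hzW
      rw [hWeq] at hmem
      obtain ⟨⟨u, v⟩, huv, heq⟩ := hmem
      have hval : (u : G) * (v : G) = z := congrArg Subtype.val heq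
      exact ⟨u, interior_subset huv.1, u.2, v, v.2, hval.symm⟩
  choose! N W hNc hWo hbW hprop using key
  obtain ⟨F, hFB', hFfin, hF⟩ := hB'c.elim_finite_subcover_image
    (fun b hb => hWo b hb) (fun b hb => Set.mem_biUnion hb (hbW b hb))
  refine ⟨⋃ b ∈ F, (N b ∩ (H : Set G)),
    hFfin.isCompact_biUnion (fun b hb => (hNc b (hFB' hb)).inter_right hH), ?_⟩
  rintro h ⟨hhH, hk⟩
  obtain ⟨b, hbB, k, hkK, rfl⟩ := hk
  have hbHK : b ∈ (H : Set G) * (K : Set G) := by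
    have : b = (b * k) * k⁻¹ := by group
    rw [this]
    exact Set.mul_mem_mul hhH (inv_mem hkK)
  have hbB' : b ∈ B' := ⟨hbB, hbHK⟩
  obtain ⟨b₀, hb₀F, hbW₀⟩ := by
    simpa only [Set.mem_iUnion, exists_prop] using hF hbB'
  obtain ⟨u, huN, huH, v, hvK, hbuv⟩ := hprop b₀ (hFB' hb₀F) b hbW₀ hbHK
  have hmem2 : u⁻¹ * (b * k) ∈ ((H ⊓ K : Subgroup G) : Set G) := by
    refine Subgroup.mem_inf.2 ⟨?_, ?_⟩
    · exact mul_mem (inv_mem huH) hhH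
    · have : u⁻¹ * (b * k) = v * k := by rw [hbuv]; group
      rw [this]
      exact mul_mem hvK hkK
  have hbk : b * k = u * (u⁻¹ * (b * k)) := by group
  show b * k ∈ _
  rw [hbk]
  exact Set.mul_mem_mul (Set.mem_biUnion hb₀F ⟨huN, huH⟩) hmem2

/-- The image of a closed subgroup `H'` in `G ⧸ L` for `L ≤ H'` is closed. -/
lemma aux_image_closed (L H' : Subgroup G) (hLH : L ≤ H') (hH' : IsClosed (H' : Set G)) :
    IsClosed ((QuotientGroup.mk : G → G ⧸ L) '' (H' : Set G)) := by
  rw [← (QuotientGroup.isQuotientMap_mk L).isClosed_preimage]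
  have : (QuotientGroup.mk : G → G ⧸ L) ⁻¹' (QuotientGroup.mk '' (H' : Set G))
      = (H' : Set G) := by
    ext z
    constructor
    · rintro ⟨h, hhH, heq⟩
      have : h⁻¹ * z ∈ L := QuotientGroup.eq.1 heq
      have hz : z = h * (h⁻¹ * z) := by group
      rw [hz]
      exact mul_mem hhH (hLH this)
    · intro hz
      exact ⟨z, hz, rfl⟩
  rw [this]
  exact hH'

/-- The coset space of a topological group is a regular topological space. -/
lemma aux_regular (H : Subgroup G) : RegularSpace (G ⧸ H) := by
  apply RegularSpace.of_exists_mem_nhds_isClosed_subset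
  intro x S hS
  obtain ⟨y, rfl⟩ := QuotientGroup.mk_surjective x
  have h1 : ((QuotientGroup.mk : G → G ⧸ H) ⁻¹' S) ∈ nhds y :=
    (QuotientGroup.continuous_mk).continuousAt.preimage_mem_nhds hS
  obtain ⟨O, hOsub, hOopen, hyO⟩ := mem_nhds_iff.1 h1
  have hWopen : IsOpen (O * ({y⁻¹} : Set G)) := hOopen.mul_right
  have h1W : (1 : G) ∈ O * ({y⁻¹} : Set G) := by
    refine ⟨y, hyO, y⁻¹, rfl, mul_inv_cancel y⟩
  obtain ⟨V₀, hV₀o, hV₀1, hV₀sub⟩ := exists_open_nhds_one_mul_subset (hWopen.mem_nhds h1W)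
  set V := V₀ ∩ V₀⁻¹ with hVdef
  have hVo : IsOpen V := hV₀o.inter hV₀o.inv
  have hV1 : (1 : G) ∈ V := ⟨hV₀1, by simpa using hV₀1⟩
  refine ⟨closure ((QuotientGroup.mk : G → G ⧸ H) '' (V * {y})), ?_, isClosed_closure, ?_⟩
  · apply Filter.mem_of_superset _ subset_closure
    have : IsOpen ((QuotientGroup.mk : G → G ⧸ H) '' (V * {y})) :=
      QuotientGroup.isOpenMap_coe _ (hVo.mul_right)
    refine this.mem_nhds ⟨1 * y, Set.mul_mem_mul hV1 rfl, by simp⟩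
  · intro z hz
    obtain ⟨z', rfl⟩ := QuotientGroup.mk_surjective z
    have hnb : ((QuotientGroup.mk : G → G ⧸ H) '' (V * {z'})) ∈ nhds (QuotientGroup.mk z') := by
      have : IsOpen ((QuotientGroup.mk : G → G ⧸ H) '' (V * {z'})) :=
        QuotientGroup.isOpenMap_coe _ (hVo.mul_right)
      exact this.mem_nhds ⟨1 * z', Set.mul_mem_mul hV1 rfl, by simp⟩
    obtain ⟨w, hw1, hw2⟩ := (mem_closure_iff_nhds.1 hz) _ hnb
    obtain ⟨a, ha, heqa⟩ := hw1
    obtain ⟨b, hb, heqb⟩ := hw2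
    obtain ⟨v₁, hv₁, w₁, rfl, rfl⟩ := ha
    obtain ⟨v₂, hv₂, w₂, rfl, rfl⟩ := hb
    have heq : (QuotientGroup.mk (v₁ * w₁) : G ⧸ H) = QuotientGroup.mk (v₂ * w₂) :=
      heqa.trans heqb.symm
    have hmem : (v₁ * w₁)⁻¹ * (v₂ * w₂) ∈ H := QuotientGroup.eq.1 heq
    have hw₁eq : w₁ = (v₁⁻¹ * v₂ * w₂) * ((v₁ * w₁)⁻¹ * (v₂ * w₂))⁻¹ := by group
    have hmk : (QuotientGroup.mk w₁ : G ⧸ H) = QuotientGroup.mk (v₁⁻¹ * v₂ * w₂) := by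
      conv_lhs => rw [hw₁eq]
      exact QuotientGroup.mk_mul_of_mem _ (inv_mem hmem)
    have hvv : v₁⁻¹ * v₂ ∈ O * ({w₂⁻¹} : Set G) :=
      hV₀sub (Set.mul_mem_mul hv₁.2 hv₂.1)
    obtain ⟨o, hoO, y', hy', hoy⟩ := hvv
    have heqo : v₁⁻¹ * v₂ * w₂ = o := by
      rw [← hoy, Set.mem_singleton_iff.1 hy']; group
    rw [hmk, heqo]
    exact hOsub hoO
end Aux2

section MainProof
variable {G : Type*} [Group G] [TopologicalSpace G] [IsTopologicalGroup G]

theorem stmt_19_aux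
    [LocallyCompactSpace G] [T2Space G]
    (𝓛 : Set (Subgroup G))
    (h_closed : ∀ H ∈ 𝓛, IsClosed (H : Set G))
    (h_inter : ∀ H ∈ 𝓛, ∀ K ∈ 𝓛, H ⊓ K ∈ 𝓛)
    (h_prod : ∀ H ∈ 𝓛, ∀ K ∈ 𝓛, IsClosed ((H : Set G) * (K : Set G)) ∧
        IsOpenMap (fun p : H × K =>
          (⟨(p.1 : G) * (p.2 : G), Set.mul_mem_mul p.1.2 p.2.2⟩ :
            ((H : Set G) * (K : Set G) : Set G))))
    (V : Subgroup G → Set (G → ℂ))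
    (hV : ∀ H : Subgroup G, V H = {g : G → ℂ | ∃ f : G ⧸ H → ℂ, Continuous f ∧
        (∀ ε : ℝ, 0 < ε → IsCompact {x : G ⧸ H | ε ≤ ‖f x‖}) ∧
        g = f ∘ (QuotientGroup.mk : G → G ⧸ H)}) :
    (∀ (s : Finset (Subgroup G)), (↑s : Set (Subgroup G)) ⊆ 𝓛 →
      ∀ g : Subgroup G → (G → ℂ), (∀ H ∈ s, g H ∈ V H) →
        ∑ H ∈ s, g H = 0 → ∀ H ∈ s, g H = 0) ↔
    (∀ H ∈ 𝓛, ∀ K ∈ 𝓛, K ≤ H → K ≠ H →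
      ¬ IsCompact ((QuotientGroup.mk : G → G ⧸ K) '' (H : Set G))) := by
  classical
  constructor
  · -- linear independence implies noncompactness of coset spaces
    intro hlhs H hH K hK hKH hKne hcomp
    haveI : RegularSpace (G ⧸ H) := aux_regular H
    obtain ⟨f, hfsupp, hfnn, hfx⟩ := exists_continuous_nonneg_pos ((1 : G) : G ⧸ H)
    set fH : G ⧸ H → ℂ := fun y => ((f y : ℝ) : ℂ) with hfHdef
    have hfHc : Continuous fH := Complex.continuous_ofReal.comp f.continuous
    have hfH0 : ∀ ε : ℝ, 0 < ε → IsCompact {y : G ⧸ H | ε ≤ ‖fH y‖} := by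
      intro ε hε
      refine IsCompact.of_isClosed_subset hfsupp
        (isClosed_le continuous_const hfHc.norm) ?_
      intro y hy
      apply subset_tsupport
      intro h0
      rw [Set.mem_setOf_eq, hfHdef] at hy
      simp only [Complex.norm_real, h0, norm_zero] at hy
      · linarith
    -- the function on G ⧸ K obtained by composing with the projection
    set f' : G ⧸ K → ℂ := fun z => fH (QuotientGroup.mk z.out) with hf'def
    have key : ∀ x : G, f' (QuotientGroup.mk x) = fH (QuotientGroup.mk x) := by
      intro x
      obtain ⟨k, hk⟩ := QuotientGroup.mk_out_eq_mul K x
      rw [hf'def]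
      simp only []
      rw [hk, QuotientGroup.mk_mul_of_mem x (hKH k.2)]
    have hf'c : Continuous f' := by
      rw [(QuotientGroup.isQuotientMap_mk K).continuous_iff]
      have : (f' ∘ (QuotientGroup.mk : G → G ⧸ K)) = fH ∘ (QuotientGroup.mk : G → G ⧸ H) := by
        funext x; exact key x
      rw [this]
      exact hfHc.comp QuotientGroup.continuous_mk
    have hf'0 : ∀ ε : ℝ, 0 < ε → IsCompact {z : G ⧸ K | ε ≤ ‖f' z‖} := by
      intro ε hε
      obtain ⟨C, hCc, hCsub⟩ := aux_lift_compact H (hfH0 ε hε)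
      have hbig : IsCompact ((fun p : G × (G ⧸ K) => p.1 • p.2) ''
          (C ×ˢ ((QuotientGroup.mk : G → G ⧸ K) '' (H : Set G)))) :=
        (hCc.prod hcomp).image continuous_smul
      refine IsCompact.of_isClosed_subset hbig
        (isClosed_le continuous_const hf'c.norm) ?_
      intro z hz
      rw [Set.mem_setOf_eq] at hz
      have hzout : z.out ∈ (QuotientGroup.mk : G → G ⧸ H) ⁻¹' {y : G ⧸ H | ε ≤ ‖fH y‖} := by
        rw [Set.mem_preimage, Set.mem_setOf_eq]
        calc ε ≤ ‖f' z‖ := hz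
        _ = ‖f' (QuotientGroup.mk z.out)‖ := by rw [QuotientGroup.out_eq']
        _ = ‖fH (QuotientGroup.mk z.out)‖ := by rw [key]
      obtain ⟨c, hc, h, hh, heq⟩ := hCsub hzout
      refine ⟨(c, QuotientGroup.mk h), ⟨hc, ⟨h, hh, rfl⟩⟩, ?_⟩
      show c • (QuotientGroup.mk h : G ⧸ K) = z
      have heq' : c * h = Quotient.out z := heq
      rw [MulAction.Quotient.smul_mk, smul_eq_mul, heq', QuotientGroup.out_eq']
    set g : Subgroup G → (G → ℂ) := fun L =>
      if L = H then fH ∘ (QuotientGroup.mk : G → G ⧸ H)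
      else if L = K then (fun x : G => -(f' (QuotientGroup.mk x))) else 0 with hgdef
    have hgH : g H = fH ∘ (QuotientGroup.mk : G → G ⧸ H) := by
      simp [hgdef]
    have hgK : g K = fun x : G => -(f' (QuotientGroup.mk x)) := by
      simp [hgdef, hKne]
    have hgH0 : g H = 0 := by
      refine hlhs {H, K} ?_ g ?_ ?_ H (Finset.mem_insert_self H {K})
      · intro L hL
        simp only [Finset.coe_insert, Finset.coe_singleton, Set.mem_insert_iff,
          Set.mem_singleton_iff] at hL
        rcases hL with rfl | rfl
        · exact hH
        · exact hK
      · intro L hL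
        rcases Finset.mem_insert.1 hL with rfl | hL
        · rw [hV L, hgH]
          exact ⟨fH, hfHc, hfH0, rfl⟩
        · rw [Finset.mem_singleton.1 hL, hV K, hgK]
          refine ⟨fun z => -(f' z), hf'c.neg, ?_, rfl⟩
          intro ε hε
          simpa only [norm_neg] using hf'0 ε hε
      · rw [Finset.sum_pair (Ne.symm hKne), hgH, hgK]
        funext x
        simp only [Pi.add_apply, Function.comp_apply, Pi.zero_apply, ← key x]
        ring
    have hzero : ((f ((1 : G) : G ⧸ H) : ℝ) : ℂ) = 0 := by
      have h1 := congrFun hgH0 1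
      rw [hgH] at h1
      exact h1
    exact hfx (by exact_mod_cast hzero)
  · -- noncompactness of coset spaces implies linear independence
    intro hrhs
    suffices main : ∀ (n : ℕ) (s : Finset (Subgroup G)), s.card ≤ n →
        (↑s : Set (Subgroup G)) ⊆ 𝓛 →
        ∀ g : Subgroup G → (G → ℂ), (∀ H ∈ s, g H ∈ V H) →
        ∑ H ∈ s, g H = 0 → ∀ H ∈ s, g H = 0 by
      exact fun s hs g hgV hsum => main s.card s le_rfl hs g hgV hsum
    intro n
    induction n with
    | zero =>
      intro s hcard _ g _ _ H hHs
      rw [Nat.le_zero, Finset.card_eq_zero] at hcard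
      subst hcard
      exact absurd hHs (Finset.notMem_empty H)
    | succ n IH =>
      intro s hcard hs g hgV hsum H hHs
      obtain ⟨M, hMs, hMmax'⟩ := (s : Set (Subgroup G)).toFinite.exists_maximal
        ⟨H, hHs⟩
      have hMmax : ∀ a' ∈ (s : Set (Subgroup G)), M ≤ a' → M = a' :=
        fun a' ha' h => le_antisymm h (hMmax' ha' h)
      rw [Finset.mem_coe] at hMs
      -- the component of a maximal element vanishes
      have hgM : g M = 0 := by
        have hgVM := hgV M hMs
        rw [hV M] at hgVM
        obtain ⟨fM, hfMc, hfM0, hgMf⟩ := hgVM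
        funext x
        show g M x = 0
        by_contra hx
        have hεpos : 0 < ‖g M x‖ := norm_pos_iff.2 hx
        set ε := ‖g M x‖ with hεdef
        set t := s.erase M with htdef
        set δ := ε / (t.card + 1) with hδdef
        have hδpos : 0 < δ := div_pos hεpos (by positivity)
        have hSK : ∀ K ∈ t, ∃ C : Set G, IsCompact C ∧
            {h : G | h ∈ (M : Set G) ∧ δ ≤ ‖g K (x * h)‖} ⊆
              C * ((M ⊓ K : Subgroup G) : Set G) := by
          intro K hK
          have hKs : K ∈ s := Finset.mem_of_mem_erase hK
          have hgVK := hgV K hKs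
          rw [hV K] at hgVK
          obtain ⟨fK, hfKc, hfK0, hgKf⟩ := hgVK
          obtain ⟨C₀, hC₀c, hC₀sub⟩ := aux_lift_compact K (hfK0 δ hδpos)
          obtain ⟨C, hCc, hCsub⟩ := aux_inter_bound M K (h_closed M (hs hMs))
            (h_prod M (hs hMs) K (hs hKs)).1 (h_prod M (hs hMs) K (hs hKs)).2
            (B := ({x⁻¹} : Set G) * C₀) (isCompact_singleton.mul hC₀c)
          refine ⟨C, hCc, ?_⟩
          rintro h ⟨hhM, hhδ⟩
          apply hCsub
          refine ⟨hhM, ?_⟩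
          have hx2 : x * h ∈ (QuotientGroup.mk : G → G ⧸ K) ⁻¹' {y | δ ≤ ‖fK y‖} := by
            rw [Set.mem_preimage, Set.mem_setOf_eq]
            rw [hgKf] at hhδ
            exact hhδ
          obtain ⟨c, hc, k, hk, heq⟩ := hC₀sub hx2
          refine ⟨x⁻¹ * c, Set.mul_mem_mul rfl hc, k, hk, ?_⟩
          have heq' : c * k = x * h := heq
          show x⁻¹ * c * k = h
          rw [mul_assoc, heq']; group
        choose! C hCc hCsub using hSK
        have hcover : (M : Set G) ⊆ ⋃ K ∈ t, C K * ((M ⊓ K : Subgroup G) : Set G) := by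
          intro h hh
          have hsum_pt : ∑ K ∈ s, g K (x * h) = 0 := by
            have := congrFun hsum (x * h)
            simpa using this
          have hinv : g M (x * h) = g M x := by
            rw [hgMf]
            exact congrArg fM (QuotientGroup.mk_mul_of_mem x hh)
          have hteq : ∑ K ∈ t, g K (x * h) = - g M x := by
            rw [htdef, Finset.sum_erase_eq_sub hMs, hsum_pt, hinv]
            ring
          have hex : ∃ K ∈ t, δ ≤ ‖g K (x * h)‖ := by
            by_contra hcon
            push_neg at hcon
            have h1 : ε = ‖∑ K ∈ t, g K (x * h)‖ := by rw [hteq, norm_neg]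
            have h2 : ‖∑ K ∈ t, g K (x * h)‖ ≤ ∑ K ∈ t, ‖g K (x * h)‖ :=
              norm_sum_le _ _
            have h3 : ∑ K ∈ t, ‖g K (x * h)‖ ≤ t.card * δ := by
              calc ∑ K ∈ t, ‖g K (x * h)‖ ≤ ∑ _K ∈ t, δ :=
                Finset.sum_le_sum fun K hK => le_of_lt (hcon K hK)
              _ = t.card * δ := by rw [Finset.sum_const, nsmul_eq_mul]
            have h5 : ((t.card : ℝ) + 1) * δ = ε := by
              rw [hδdef]; field_simp
            nlinarith
          obtain ⟨K, hKt, hKδ⟩ := hex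
          exact Set.mem_biUnion hKt (hCsub K hKt ⟨hh, hKδ⟩)
        have hsat : ∀ K ∈ t, ∀ a ∈ (M : Set G),
            ({a} : Set G) * ((M ⊓ K : Subgroup G) : Set G) ⊆ (M : Set G) := by
          rintro K hK a ha z hz
          obtain ⟨a', ha', l, hl, rfl⟩ := hz
          rw [Set.mem_singleton_iff.1 ha']
          exact mul_mem ha (inf_le_left (α := Subgroup G) (a := M) (b := K) hl)
        obtain ⟨K, hKt, D, hDc, hMD⟩ := aux_neumann
          ((t.image (fun K => M ⊓ K)).card) t (fun K => M ⊓ K) C (M : Set G)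
          le_rfl hCc hcover hsat ⟨1, M.one_mem⟩
        have hKs : K ∈ s := Finset.mem_of_mem_erase hKt
        have hML : M ⊓ K ≠ M := by
          intro heq
          have hMK : M ≤ K := by rw [← heq]; exact inf_le_right
          have hMK2 : M = K := hMmax K (Finset.mem_coe.2 hKs) hMK
          exact (Finset.mem_erase.1 hKt).1 hMK2.symm
        refine hrhs M (hs hMs) (M ⊓ K) (h_inter M (hs hMs) K (hs hKs))
          inf_le_left hML ?_
        have himg : ((QuotientGroup.mk : G → G ⧸ (M ⊓ K)) '' (M : Set G)) ⊆
            (QuotientGroup.mk : G → G ⧸ (M ⊓ K)) '' D := by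
          rintro _ ⟨m, hm, rfl⟩
          obtain ⟨d, hd, l, hl, heq⟩ := hMD hm
          refine ⟨d, hd, ?_⟩
          have heq' : d * l = m := heq
          rw [← heq']
          exact (QuotientGroup.mk_mul_of_mem d hl).symm
        exact IsCompact.of_isClosed_subset (hDc.image QuotientGroup.continuous_mk)
          (aux_image_closed (M ⊓ K) M inf_le_left (h_closed M (hs hMs))) himg
      by_cases hHM : H = M
      · rw [hHM]; exact hgM
      · have hHs' : H ∈ s.erase M := Finset.mem_erase.2 ⟨hHM, hHs⟩
        refine IH (s.erase M) ?_ ?_ g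
          (fun L hL => hgV L (Finset.mem_of_mem_erase hL)) ?_ H hHs'
        · have := Finset.card_erase_of_mem hMs
          omega
        · exact fun L hL => hs (Finset.mem_of_mem_erase hL)
        · rw [Finset.sum_erase_eq_sub hMs, hsum, hgM, sub_zero]
end MainProof

theorem stmt_19
    {G : Type*} [Group G] [TopologicalSpace G] [IsTopologicalGroup G]
    [LocallyCompactSpace G] [T2Space G]
    (𝓛 : Set (Subgroup G))
    (h_closed : ∀ H ∈ 𝓛, IsClosed (H : Set G))
    (h_inter : ∀ H ∈ 𝓛, ∀ K ∈ 𝓛, H ⊓ K ∈ 𝓛)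
    (h_prod : ∀ H ∈ 𝓛, ∀ K ∈ 𝓛, IsClosed ((H : Set G) * (K : Set G)) ∧
        IsOpenMap (fun p : H × K =>
          (⟨(p.1 : G) * (p.2 : G), Set.mul_mem_mul p.1.2 p.2.2⟩ :
            ((H : Set G) * (K : Set G) : Set G))))
    (V : Subgroup G → Set (G → ℂ))
    (hV : ∀ H : Subgroup G, V H = {g : G → ℂ | ∃ f : G ⧸ H → ℂ, Continuous f ∧
        (∀ ε : ℝ, 0 < ε → IsCompact {x : G ⧸ H | ε ≤ ‖f x‖}) ∧
        g = f ∘ (QuotientGroup.mk : G → G ⧸ H)}) :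
    (∀ (s : Finset (Subgroup G)), (↑s : Set (Subgroup G)) ⊆ 𝓛 →
      ∀ g : Subgroup G → (G → ℂ), (∀ H ∈ s, g H ∈ V H) →
        ∑ H ∈ s, g H = 0 → ∀ H ∈ s, g H = 0) ↔
    (∀ H ∈ 𝓛, ∀ K ∈ 𝓛, K ≤ H → K ≠ H →
      ¬ IsCompact ((QuotientGroup.mk : G → G ⧸ K) '' (H : Set G))) := by
  exact stmt_19_aux 𝓛 h_closed h_inter h_prod V hV
end
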